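/- arXiv:2404.16782 — 8 statements merged into one kernel-verified Lean document; each statement's English description precedes it below -/
import Mathlib

section
/- Let R be a commutative ℚ-algebra and let f ∈ R⟦x⟧ be a formal power series with constant coefficient 1. Then, as formal power series in a variable z, exp( ∑_{k≥1} (1/k)·(coefficient of x^k in f^k)·z^k ) = ∑_{k≥1} (1/k)·(coefficient of x^{k−1} in f^k)·z^{k−1}. (Note that the k=1 term of the right-hand side is 1, so both sides have constant coefficient 1.) -/
open PowerSeries Finset

noncomputable section

/-- Evaluation of the power series `g` at the power series `f`
(formal composition `g ∘ f`, meaningful when `f` has zero constant term: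
the coefficient of `x^n` in `g(f)` is `∑_{k ≤ n} g_k · [x^n] f^k`). -/
def PowerSeries.substInto {R : Type*} [CommRing R] (f g : PowerSeries R) : PowerSeries R :=
  PowerSeries.mk fun n => ∑ k ∈ Finset.range (n + 1), (coeff k g) * (coeff n (f ^ k))

/-- The formal exponential `exp f` of a power series `f` with zero constant term,
over a `ℚ`-algebra. -/
def PowerSeries.expAt {R : Type*} [CommRing R] [Algebra ℚ R] (f : PowerSeries R) :
    PowerSeries R :=
  f.substInto (PowerSeries.exp R)

namespace Lemma83Aux

set_option linter.unusedSectionVars false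

variable {R : Type*} [CommRing R] [Algebra ℚ R]

lemma qsmul_cancel {n : ℕ} {x y : R} (h : ((n + 1 : ℕ) : ℚ) • x = ((n + 1 : ℕ) : ℚ) • y) :
    x = y := by
  have hne : ((n + 1 : ℕ) : ℚ) ≠ 0 := by positivity
  have h2 := congrArg (fun z => (((n + 1 : ℕ) : ℚ))⁻¹ • z) h
  rwa [inv_smul_smul₀ hne, inv_smul_smul₀ hne] at h2

/-- `[x^t] (f^t f') = [x^{t+1}] f^{t+1}`. -/
lemma coeff_pow_mul_deriv (f : R⟦X⟧) (t : ℕ) :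
    coeff t (f ^ t * d⁄dX R f) = coeff (t + 1) (f ^ (t + 1)) := by
  have h := congrArg (coeff t) (Derivation.leibniz_pow (d⁄dX R) f (t + 1))
  simp only [Nat.add_sub_cancel, smul_eq_mul, map_nsmul, coeff_derivative] at h
  apply qsmul_cancel (n := t)
  rw [Nat.cast_smul_eq_nsmul ℚ, Nat.cast_smul_eq_nsmul ℚ, ← h, nsmul_eq_mul, mul_comm]
  push_cast
  ring

variable (f : R⟦X⟧)

/-- The multiplicative inverse of `f` (assuming `constantCoeff f = 1`). -/
def g : R⟦X⟧ := PowerSeries.invOfUnit f 1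

/-- `q = f - X f'`. -/
def q : R⟦X⟧ := f - X * d⁄dX R f

/-- `u = X / f`. -/
def u : R⟦X⟧ := X * g f

lemma hfg (hf : PowerSeries.constantCoeff f = 1) : f * g f = 1 :=
  PowerSeries.mul_invOfUnit f 1 (by simp [hf])

lemma hg0 : PowerSeries.constantCoeff (g f) = 1 := by
  simp [g, PowerSeries.constantCoeff_invOfUnit]

lemma hDg (hf : PowerSeries.constantCoeff f = 1) :
    f ^ 2 * d⁄dX R (g f) = -(d⁄dX R f) := by
  have h : f • d⁄dX R (g f) + g f • d⁄dX R f = 0 := by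
    have h0 := congrArg (d⁄dX R) (hfg f hf)
    rwa [Derivation.leibniz, Derivation.map_one_eq_zero] at h0
  have h2 := congrArg (fun w => f * w) h
  simp only [smul_eq_mul, mul_add, mul_zero] at h2
  have h3 : f ^ 2 * d⁄dX R (g f) = -((f * g f) * d⁄dX R f) := by
    linear_combination h2
  rw [h3, hfg f hf, one_mul]

lemma coeff_u_pow_self (t : ℕ) : coeff t (u f ^ t) = 1 := by
  rw [u, mul_pow]
  have h := PowerSeries.coeff_X_pow_mul ((g f) ^ t) t 0
  rw [zero_add] at h
  rw [h, coeff_zero_eq_constantCoeff_apply, map_pow, hg0 f, one_pow]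

lemma coeff_u_pow_mul_of_lt {t i : ℕ} (h : t < i) (w : R⟦X⟧) :
    coeff t (u f ^ i * w) = 0 := by
  rw [u, mul_pow, mul_assoc, PowerSeries.coeff_X_pow_mul', if_neg (by omega)]

lemma coeff_u_pow_of_lt {t i : ℕ} (h : t < i) : coeff t (u f ^ i) = 0 := by
  have := coeff_u_pow_mul_of_lt f h 1
  rwa [mul_one] at this

/-- `[x^{t+1}] (f^t q) = 0`. -/
lemma qlem (t : ℕ) : coeff (t + 1) (f ^ t * q f) = 0 := by
  have h1 : f ^ t * q f = f ^ (t + 1) - X * (f ^ t * d⁄dX R f) := by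
    rw [q]; ring
  rw [h1, map_sub, PowerSeries.coeff_succ_X_mul, coeff_pow_mul_deriv, sub_self]

/-- `(j+1) [x^j] (f^j q) = [x^j] f^{j+1}`. -/
lemma qb (j : ℕ) : ((j + 1 : ℕ) : ℚ) • coeff j (f ^ j * q f) = coeff j (f ^ (j + 1)) := by
  cases j with
  | zero =>
      have h1 : f ^ 0 * q f = f ^ 1 - X * (f ^ 0 * d⁄dX R f) := by rw [q]; ring
      rw [h1, map_sub]
      have h2 : coeff 0 (X * (f ^ 0 * d⁄dX R f)) = 0 := by
        rw [coeff_zero_eq_constantCoeff_apply, map_mul, constantCoeff_X, zero_mul]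
      rw [h2, sub_zero]
      norm_num
  | succ m =>
      have h1 : f ^ (m + 1) * q f = f ^ (m + 2) - X * (f ^ (m + 1) * d⁄dX R f) := by
        rw [q]; ring
      have hD := congrArg (coeff m) (Derivation.leibniz_pow (d⁄dX R) f (m + 2))
      simp only [show m + 2 - 1 = m + 1 from rfl, smul_eq_mul, map_nsmul,
        coeff_derivative] at hD
      -- hD : coeff (m+1) f^{m+2} * (↑m + 1) = (m + 2) • coeff m (f^{m+1} * Df)
      have hd : ((m + 2 : ℕ) : ℚ) • coeff m (f ^ (m + 1) * d⁄dX R f)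
          = ((m + 1 : ℕ) : ℚ) • coeff (m + 1) (f ^ (m + 2)) := by
        rw [Nat.cast_smul_eq_nsmul ℚ, ← hD, Nat.cast_smul_eq_nsmul ℚ, nsmul_eq_mul, mul_comm]
        push_cast; ring
      rw [h1, map_sub, PowerSeries.coeff_succ_X_mul, smul_sub, hd]
      have : ((m + 1 + 1 : ℕ) : ℚ) = ((m + 1 : ℕ) : ℚ) + 1 := by push_cast; ring
      rw [this, add_smul, one_smul]
      ring

/-- residue lemma, off-diagonal case. -/
lemma A_lt {i j : ℕ} (hij : i < j) (hf : PowerSeries.constantCoeff f = 1) :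
    coeff j (f ^ (j + 1) * (u f ^ i * d⁄dX R (u f))) = 0 := by
  have hDu : d⁄dX R (u f) = g f + X * d⁄dX R (g f) := by
    rw [u, Derivation.leibniz, smul_eq_mul, smul_eq_mul, derivative_X, mul_one]
    ring
  obtain ⟨e, he⟩ : ∃ e, j = i + 1 + e := ⟨j - (i + 1), by omega⟩
  have h1 : f ^ (j + 1) * (u f ^ i * d⁄dX R (u f))
      = X ^ i * ((f * g f) ^ i *
          (f ^ e * (f * (f * g f) + X * (f ^ 2 * d⁄dX R (g f))))) := by
    rw [hDu, u, show j + 1 = i + 2 + e by omega, mul_pow]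
    ring
  rw [h1, hfg f hf, hDg f hf]
  have h2 : (1 : R⟦X⟧) ^ i * (f ^ e * (f * 1 + X * -(d⁄dX R f))) = f ^ e * q f := by
    rw [q]; ring
  rw [h2, show j = (e + 1) + i by omega, PowerSeries.coeff_X_pow_mul, qlem]

/-- residue lemma, diagonal case. -/
lemma A_eq (j : ℕ) (hf : PowerSeries.constantCoeff f = 1) :
    coeff j (f ^ (j + 1) * (u f ^ j * d⁄dX R (u f))) = 1 := by
  have hDu : d⁄dX R (u f) = g f + X * d⁄dX R (g f) := by
    rw [u, Derivation.leibniz, smul_eq_mul, smul_eq_mul, derivative_X, mul_one]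
    ring
  have h1 : f ^ (j + 1) * (u f ^ j * d⁄dX R (u f))
      = X ^ j * ((f * g f) ^ (j + 1) + X * ((f * g f) ^ j * (f * d⁄dX R (g f)))) := by
    rw [hDu, u, mul_pow]
    ring
  rw [h1, hfg f hf]
  have h2 := PowerSeries.coeff_X_pow_mul
    ((1 : R⟦X⟧) ^ (j + 1) + X * ((1 : R⟦X⟧) ^ j * (f * d⁄dX R (g f)))) j 0
  rw [zero_add] at h2
  rw [h2, coeff_zero_eq_constantCoeff_apply, map_add, map_mul, constantCoeff_X, zero_mul,
    add_zero, one_pow, map_one]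

/-- `u' = g + X g'`. -/
lemma hDu : d⁄dX R (u f) = g f + X * d⁄dX R (g f) := by
  rw [u, Derivation.leibniz, smul_eq_mul, smul_eq_mul, derivative_X, mul_one]
  ring

/-- `f² u' = q`. -/
lemma hq2 (hf : PowerSeries.constantCoeff f = 1) :
    f ^ 2 * d⁄dX R (u f) = q f := by
  have h1 : f ^ 2 * d⁄dX R (u f) = f * (f * g f) + X * (f ^ 2 * d⁄dX R (g f)) := by
    rw [hDu]; ring
  rw [h1, hfg f hf, hDg f hf, q]; ring

/-- The coefficients of the (unique) power series `Φ` with `Φ(u) = f`. -/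
def Phi (f u : R⟦X⟧) : ℕ → R
  | t => coeff t f - ∑ j ∈ (Finset.range t).attach, Phi f u j.1 * coeff t (u ^ j.1)
  decreasing_by exact Finset.mem_range.mp j.2

lemma Phi_def (f u : R⟦X⟧) (t : ℕ) :
    Phi f u t = coeff t f - ∑ j ∈ Finset.range t, Phi f u j * coeff t (u ^ j) := by
  rw [Phi, ← Finset.sum_attach (Finset.range t) (fun j => Phi f u j * coeff t (u ^ j))]

lemma Phi_spec (t : ℕ) :
    ∑ j ∈ range (t + 1), Phi f (u f) j * coeff t (u f ^ j) = coeff t f := by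
  rw [Finset.sum_range_succ, coeff_u_pow_self f, mul_one, Phi_def]
  ring

/-- The partial sum `∑_{j ≤ N} Φ_j u^j`. -/
def Ssum (f : R⟦X⟧) (N : ℕ) : R⟦X⟧ :=
  ∑ j ∈ Finset.range (N + 1), Phi f (u f) j • u f ^ j

lemma coeff_Ssum (N t : ℕ) (ht : t ≤ N) : coeff t (Ssum f N) = coeff t f := by
  rw [Ssum, map_sum]
  simp only [LinearMap.map_smul, smul_eq_mul]
  rw [← Finset.sum_subset (Finset.range_subset_range.mpr (by omega : t + 1 ≤ N + 1))
      (fun i _ hi => by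
        have hti : t < i := by simpa using hi
        rw [coeff_u_pow_of_lt f hti, mul_zero])]
  exact Phi_spec f t

lemma dvd_sub (N : ℕ) : (X : R⟦X⟧) ^ (N + 1) ∣ (f - Ssum f N) := by
  rw [PowerSeries.X_pow_dvd_iff]
  intro m hm
  rw [map_sub, coeff_Ssum f N m (by omega), sub_self]

/-- `[x^j](f^j q) = Φ_j`. -/
lemma qc_eq_Phi (hf : PowerSeries.constantCoeff f = 1) (j : ℕ) :
    coeff j (f ^ j * q f) = Phi f (u f) j := by
  have e1 : f ^ j * q f = (f ^ (j + 1) * d⁄dX R (u f)) * f := by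
    have h := hq2 f hf
    linear_combination (-(f ^ j) : R⟦X⟧) * h
  obtain ⟨w, hw⟩ := dvd_sub f j
  have e2 : coeff j ((f ^ (j + 1) * d⁄dX R (u f)) * f)
      = coeff j ((f ^ (j + 1) * d⁄dX R (u f)) * Ssum f j) := by
    have hsplit : (f ^ (j + 1) * d⁄dX R (u f)) * f
        = (f ^ (j + 1) * d⁄dX R (u f)) * Ssum f j
          + X ^ (j + 1) * (w * (f ^ (j + 1) * d⁄dX R (u f))) := by
      linear_combination (f ^ (j + 1) * d⁄dX R (u f)) * hw
    rw [hsplit, map_add, PowerSeries.coeff_X_pow_mul', if_neg (by omega), add_zero]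
  have hterm : ∀ i, (f ^ (j + 1) * d⁄dX R (u f)) * (Phi f (u f) i • u f ^ i)
      = Phi f (u f) i • (f ^ (j + 1) * (u f ^ i * d⁄dX R (u f))) := by
    intro i
    rw [mul_smul_comm]
    congr 1
    ring
  rw [e1, e2, Ssum, Finset.mul_sum, map_sum]
  simp only [hterm, LinearMap.map_smul, smul_eq_mul]
  rw [Finset.sum_eq_single j]
  · rw [A_eq f j hf, mul_one]
  · intro i hi hne
    have hij : i < j := by
      have := Finset.mem_range.mp hi
      omega
    rw [A_lt f hij hf, mul_zero]
  · intro h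
    exact absurd (Finset.self_mem_range_succ j) h

/-- The master identity: `∑_{k ≤ N} [x^k]f^k · [x^{N-k}](f^{N-k} q) = [x^N] f^{N+1}`. -/
lemma master (hf : PowerSeries.constantCoeff f = 1) (N : ℕ) :
    ∑ k ∈ range (N + 1), coeff k (f ^ k) * coeff (N - k) (f ^ (N - k) * q f)
      = coeff N (f ^ (N + 1)) := by
  have hstep : ∀ k ∈ range (N + 1),
      coeff k (f ^ k) * coeff (N - k) (f ^ (N - k) * q f)
        = coeff N (coeff (N - k) (f ^ (N - k) * q f) • (X ^ (N - k) * f ^ k)) := by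
    intro k hk
    have hk' : k ≤ N := by have := Finset.mem_range.mp hk; omega
    rw [LinearMap.map_smul, smul_eq_mul]
    have h := PowerSeries.coeff_X_pow_mul (f ^ k) (N - k) k
    rw [show k + (N - k) = N by omega] at h
    rw [h]
    ring
  rw [Finset.sum_congr rfl hstep, ← map_sum]
  have hreflect : ∑ k ∈ range (N + 1),
      coeff (N - k) (f ^ (N - k) * q f) • (X ^ (N - k) * f ^ k)
      = ∑ j ∈ range (N + 1), coeff j (f ^ j * q f) • (X ^ j * f ^ (N - j)) := by
    rw [← Finset.sum_range_reflect
      (fun j => coeff j (f ^ j * q f) • (X ^ j * f ^ (N - j))) (N + 1)]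
    apply Finset.sum_congr rfl
    intro k hk
    have hk' : k ≤ N := by have := Finset.mem_range.mp hk; omega
    rw [show N + 1 - 1 - k = N - k by omega, show N - (N - k) = k by omega]
  have hSs : ∑ j ∈ range (N + 1), coeff j (f ^ j * q f) • (X ^ j * f ^ (N - j))
      = f ^ N * Ssum f N := by
    rw [Ssum, Finset.mul_sum]
    apply Finset.sum_congr rfl
    intro j hj
    have hj' : j ≤ N := by have := Finset.mem_range.mp hj; omega
    rw [qc_eq_Phi f hf j, mul_smul_comm]
    congr 1
    rw [u, mul_pow]
    have hfN : f ^ N = f ^ (N - j) * f ^ j := by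
      rw [← pow_add]
      congr 1
      omega
    have hpow : f ^ j * (g f) ^ j = 1 := by rw [← mul_pow, hfg f hf, one_pow]
    rw [hfN]
    linear_combination (-(X ^ j * f ^ (N - j)) : R⟦X⟧) * hpow
  rw [hreflect, hSs]
  obtain ⟨w, hw⟩ := dvd_sub f N
  have hrw : f ^ (N + 1) = f ^ N * Ssum f N + X ^ (N + 1) * (f ^ N * w) := by
    linear_combination (f ^ N) * hw
  rw [hrw, map_add, PowerSeries.coeff_X_pow_mul', if_neg (by omega), add_zero]

/-- The right-hand side coefficients. -/
def b (f : R⟦X⟧) (n : ℕ) : R := (((n + 1 : ℕ) : ℚ))⁻¹ • coeff n (f ^ (n + 1))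

lemma qc_eq_b (j : ℕ) : coeff j (f ^ j * q f) = b f j := by
  have h := qb f j
  have hne : ((j + 1 : ℕ) : ℚ) ≠ 0 := by positivity
  rw [b, ← h, inv_smul_smul₀ hne]

lemma b_zero (hf : PowerSeries.constantCoeff f = 1) : b f 0 = 1 := by
  simp [b, pow_one, coeff_zero_eq_constantCoeff_apply, hf]

lemma b_rec (hf : PowerSeries.constantCoeff f = 1) (n : ℕ) :
    ((n + 1 : ℕ) : ℚ) • b f (n + 1)
      = ∑ m ∈ range (n + 1), coeff (m + 1) (f ^ (m + 1)) * b f (n - m) := by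
  have hm := master f hf (n + 1)
  have hm' : ∑ k ∈ range (n + 2), coeff k (f ^ k) * b f (n + 1 - k)
      = coeff (n + 1) (f ^ (n + 2)) := by
    rw [← hm]
    exact Finset.sum_congr rfl (fun k _ => by rw [qc_eq_b])
  rw [Finset.sum_range_succ'] at hm'
  simp only [pow_zero, PowerSeries.coeff_zero_one, one_mul, Nat.sub_zero,
    Nat.succ_sub_succ_eq_sub] at hm'
  have hcoeff : coeff (n + 1) (f ^ (n + 2)) = ((n + 1 + 1 : ℕ) : ℚ) • b f (n + 1) := by
    rw [b, smul_inv_smul₀ (by positivity : ((n + 1 + 1 : ℕ) : ℚ) ≠ 0)]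
  rw [hcoeff] at hm'
  have hsplit : ((n + 1 + 1 : ℕ) : ℚ) • b f (n + 1)
      = ((n + 1 : ℕ) : ℚ) • b f (n + 1) + b f (n + 1) := by
    have : ((n + 1 + 1 : ℕ) : ℚ) = ((n + 1 : ℕ) : ℚ) + 1 := by push_cast; ring
    rw [this, add_smul, one_smul]
  rw [hsplit] at hm'
  have := congrArg (fun z => z - b f (n + 1)) hm'
  simp only [add_sub_cancel_right] at this
  exact this.symm

lemma coeff_expAt (Aser : R⟦X⟧) (n : ℕ) :
    coeff n (PowerSeries.expAt Aser)
      = ∑ k ∈ range (n + 1),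
          coeff k (PowerSeries.exp R) * coeff n (Aser ^ k) := by
  rw [PowerSeries.expAt, PowerSeries.substInto, coeff_mk]

lemma coeff_pow_eq_zero_of_lt {Aser : R⟦X⟧} (hA : PowerSeries.constantCoeff Aser = 0)
    {t i : ℕ} (h : t < i) : coeff t (Aser ^ i) = 0 := by
  have hdvd : (X : R⟦X⟧) ^ i ∣ Aser ^ i :=
    pow_dvd_pow_of_dvd (PowerSeries.X_dvd_iff.mpr hA) i
  exact PowerSeries.X_pow_dvd_iff.mp hdvd t h

lemma expAt_coeff_zero (Aser : R⟦X⟧) : coeff 0 (PowerSeries.expAt Aser) = 1 := by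
  rw [coeff_expAt]
  simp [PowerSeries.coeff_exp]

lemma expAt_rec (Aser : R⟦X⟧) (hA : PowerSeries.constantCoeff Aser = 0) (n : ℕ) :
    ((n + 1 : ℕ) : ℚ) • coeff (n + 1) (PowerSeries.expAt Aser)
      = ∑ m ∈ range (n + 1),
          coeff m (d⁄dX R Aser) * coeff (n - m) (PowerSeries.expAt Aser) := by
  have hstep : ∀ k : ℕ, ((n + 1 : ℕ) : ℚ) • coeff (n + 1) (Aser ^ k)
      = (k : ℚ) • coeff n (Aser ^ (k - 1) * d⁄dX R Aser) := by
    intro k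
    have h := congrArg (coeff n) (Derivation.leibniz_pow (d⁄dX R) Aser k)
    simp only [smul_eq_mul, map_nsmul, coeff_derivative] at h
    rw [Nat.cast_smul_eq_nsmul ℚ, Nat.cast_smul_eq_nsmul ℚ, ← h, nsmul_eq_mul, mul_comm]
    push_cast; ring
  have hexp : ∀ (i : ℕ) (x : R),
      ((i + 1 : ℕ) : ℚ) • (coeff (i + 1) (PowerSeries.exp R) * x)
      = coeff i (PowerSeries.exp R) * x := by
    intro i x
    rw [PowerSeries.coeff_exp, PowerSeries.coeff_exp, Algebra.smul_def, ← mul_assoc, ← map_mul]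
    have h2 : ((Nat.factorial i : ℕ) : ℚ) ≠ 0 := Nat.cast_ne_zero.mpr (Nat.factorial_ne_zero i)
    have key : ((i + 1 : ℕ) : ℚ) * (1 / ((Nat.factorial (i + 1) : ℕ) : ℚ))
        = 1 / ((Nat.factorial i : ℕ) : ℚ) := by
      rw [Nat.factorial_succ]
      push_cast
      have h1 : (↑i + 1 : ℚ) ≠ 0 := by positivity
      field_simp
    rw [key]
  rw [coeff_expAt, Finset.smul_sum]
  have h1 : ∀ k ∈ range (n + 2),
      ((n + 1 : ℕ) : ℚ) • (coeff k (PowerSeries.exp R) * coeff (n + 1) (Aser ^ k))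
      = (k : ℚ) • (coeff k (PowerSeries.exp R)
          * coeff n (Aser ^ (k - 1) * d⁄dX R Aser)) := by
    intro k _
    rw [← mul_smul_comm, hstep k, mul_smul_comm]
  rw [Finset.sum_congr rfl h1, Finset.sum_range_succ']
  simp only [Nat.cast_zero, zero_smul, add_zero, Nat.add_sub_cancel]
  rw [Finset.sum_congr rfl (fun i (_ : i ∈ range (n + 1)) =>
      hexp i (coeff n (Aser ^ i * d⁄dX R Aser)))]
  have h2 : ∀ i ∈ range (n + 1),
      coeff i (PowerSeries.exp R) * coeff n (Aser ^ i * d⁄dX R Aser)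
      = ∑ m ∈ range (n + 1), coeff m (d⁄dX R Aser)
          * (coeff i (PowerSeries.exp R) * coeff (n - m) (Aser ^ i)) := by
    intro i _
    rw [mul_comm (Aser ^ i), PowerSeries.coeff_mul,
      Finset.Nat.sum_antidiagonal_eq_sum_range_succ_mk, Finset.mul_sum]
    exact Finset.sum_congr rfl (fun m _ => by ring)
  rw [Finset.sum_congr rfl h2, Finset.sum_comm]
  apply Finset.sum_congr rfl
  intro m hm
  rw [← Finset.mul_sum]
  congr 1
  rw [coeff_expAt]
  have hmn : n - m + 1 ≤ n + 1 := by omega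
  exact (Finset.sum_subset (Finset.range_subset_range.mpr hmn) (fun i _ hi => by
    have hlt : n - m < i := by simpa using hi
    rw [coeff_pow_eq_zero_of_lt hA hlt, mul_zero])).symm

end Lemma83Aux

/-- **Lemma 8.3**: for a formal power series `f` over a commutative `ℚ`-algebra `R` with
constant coefficient `1`, one has
`exp( ∑_{k ≥ 1} (1/k)·([x^k] f^k)·z^k ) = ∑_{k ≥ 1} (1/k)·([x^{k-1}] f^k)·z^{k-1}`. -/
theorem exp_sum_coeff_pow_eq_sum_coeff_pow
    (R : Type*) [CommRing R] [Algebra ℚ R]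
    (f : PowerSeries R) (hf : PowerSeries.constantCoeff f = 1) :
    PowerSeries.expAt
        (PowerSeries.mk fun k => if k = 0 then 0 else ((k : ℚ))⁻¹ • coeff k (f ^ k)) =
      PowerSeries.mk fun n => (((n + 1 : ℕ) : ℚ))⁻¹ • coeff n (f ^ (n + 1)) := by
  have hA0 : PowerSeries.constantCoeff
      (PowerSeries.mk fun k => if k = 0 then 0 else ((k : ℚ))⁻¹ • coeff k (f ^ k)) = 0 := by
    rw [← coeff_zero_eq_constantCoeff_apply, coeff_mk, if_pos rfl]
  set A : PowerSeries R :=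
    PowerSeries.mk fun k => if k = 0 then 0 else ((k : ℚ))⁻¹ • coeff k (f ^ k) with hAdef
  have hDA : ∀ m : ℕ, coeff m (d⁄dX R A) = coeff (m + 1) (f ^ (m + 1)) := by
    intro m
    rw [coeff_derivative, hAdef, coeff_mk, if_neg (Nat.succ_ne_zero m), smul_mul_assoc]
    have hmul : coeff (m + 1) (f ^ (m + 1)) * ((m : R) + 1)
        = ((m + 1 : ℕ) : ℚ) • coeff (m + 1) (f ^ (m + 1)) := by
      rw [Nat.cast_smul_eq_nsmul ℚ, nsmul_eq_mul, mul_comm]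
      push_cast
      ring
    rw [hmul, inv_smul_smul₀ (by positivity : ((m + 1 : ℕ) : ℚ) ≠ 0)]
  have key : ∀ n : ℕ, coeff n (PowerSeries.expAt A) = Lemma83Aux.b f n := by
    intro n
    induction n using Nat.strong_induction_on with
    | _ n ih =>
      rcases n with _ | m
      · rw [Lemma83Aux.expAt_coeff_zero, Lemma83Aux.b_zero f hf]
      · apply Lemma83Aux.qsmul_cancel (n := m)
        rw [Lemma83Aux.expAt_rec A hA0 m, Lemma83Aux.b_rec f hf m]
        apply Finset.sum_congr rfl
        intro k hk
        rw [hDA k, ih (m - k) (by omega)]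
  apply PowerSeries.ext
  intro n
  rw [coeff_mk, key n]
  rfl
end
end

section
/- Let f be a formal Laurent series over ℂ of the form f = y^{−1} + ∑_{k≥0} f_k y^k (i.e. the coefficient of y^n vanishes for n < −1 and the coefficient of y^{−1} equals 1). Then the following identity of formal power series in t holds: t · exp( ∑_{k≥1} (1/k)·(coefficient of y^0 in f^k)·t^k ) = ∑_{k≥1} (1/k)·(coefficient of y^{−1} in f^k)·t^k. -/
open PowerSeries Finset

noncomputable section

set_option linter.unusedSectionVars false

namespace LagAux

lemma coeff_mul_congr {a b c d : PowerSeries ℂ} {m : ℕ}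
    (h1 : ∀ i ≤ m, coeff i a = coeff i b)
    (h2 : ∀ i ≤ m, coeff i c = coeff i d) :
    ∀ i ≤ m, coeff i (a * c) = coeff i (b * d) := by
  intro i hi
  rw [coeff_mul, coeff_mul]
  refine Finset.sum_congr rfl ?_
  rintro ⟨x, y⟩ hxy
  rw [HasAntidiagonal.mem_antidiagonal] at hxy
  simp only [h1 x (le_trans (by omega) hi), h2 y (le_trans (by omega) hi)]

lemma coeff_pow_congr {a b : PowerSeries ℂ} {m : ℕ}
    (h : ∀ i ≤ m, coeff i a = coeff i b) :
    ∀ k, ∀ i ≤ m, coeff i (a ^ k) = coeff i (b ^ k) := by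
  intro k
  induction k with
  | zero => intro i _; simp
  | succ k ih =>
    intro i hi
    rw [pow_succ, pow_succ]
    exact coeff_mul_congr ih h i hi

/-- coefficients of the solution of `w = X * (g ∘ w)` -/
def Wfun (g : PowerSeries ℂ) : ℕ → ℂ
  | 0 => 0
  | n + 1 => ∑ k ∈ range (n + 1), coeff k g *
      coeff n ((PowerSeries.mk fun i => if h : i ≤ n then Wfun g i else 0) ^ k)

def wS (g : PowerSeries ℂ) : PowerSeries ℂ := PowerSeries.mk (Wfun g)

lemma constantCoeff_wS (g : PowerSeries ℂ) : constantCoeff (wS g) = 0 := by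
  rw [← coeff_zero_eq_constantCoeff_apply, wS, coeff_mk, Wfun]

lemma wS_eq (g : PowerSeries ℂ) : wS g = X * PowerSeries.substInto (wS g) g := by
  ext n
  cases n with
  | zero => simp [constantCoeff_wS, wS, coeff_mk, Wfun]
  | succ n =>
    rw [coeff_succ_X_mul, wS, coeff_mk, Wfun, PowerSeries.substInto, coeff_mk]
    refine Finset.sum_congr rfl fun k _ => ?_
    congr 1
    refine coeff_pow_congr ?_ k n le_rfl
    intro i hi
    rw [coeff_mk, dif_pos hi, coeff_mk]


variable {w : PowerSeries ℂ} (hw : constantCoeff w = 0)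

lemma coeff_pow_eq_zero {w : PowerSeries ℂ} (hw : constantCoeff w = 0)
    {m k : ℕ} (h : m < k) : coeff m (w ^ k) = 0 := by
  have hx : (X : PowerSeries ℂ) ∣ w := X_dvd_iff.mpr hw
  exact X_pow_dvd_iff.mp (pow_dvd_pow_of_dvd hx k) m h

include hw in
/-- key expansion lemma: coefficient of a product with a substituted series -/
lemma coeff_substInto_mul (G P : PowerSeries ℂ) (N : ℕ) :
    coeff N (PowerSeries.substInto w G * P)
      = ∑ m ∈ range (N + 1), coeff m G * coeff N (w ^ m * P) := by
  rw [coeff_mul]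
  have step : ∀ p ∈ HasAntidiagonal.antidiagonal N,
      coeff p.1 (PowerSeries.substInto w G) * coeff p.2 P
        = ∑ m ∈ range (N + 1), coeff m G * (coeff p.1 (w ^ m) * coeff p.2 P) := by
    rintro ⟨x, y⟩ hxy
    rw [HasAntidiagonal.mem_antidiagonal] at hxy
    have h1 : coeff x (PowerSeries.substInto w G)
        = ∑ m ∈ range (N + 1), coeff m G * coeff x (w ^ m) := by
      rw [PowerSeries.substInto, coeff_mk]
      refine Finset.sum_subset ?_ ?_
      · exact Finset.range_subset_range.mpr (by omega)
      · intro m _ hm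
        rw [Finset.mem_range, not_lt] at hm
        rw [coeff_pow_eq_zero hw (by omega), mul_zero]
    rw [h1, Finset.sum_mul]
    exact Finset.sum_congr rfl fun m _ => by ring
  rw [Finset.sum_congr rfl step, Finset.sum_comm]
  refine Finset.sum_congr rfl fun m _ => ?_
  rw [← Finset.mul_sum, coeff_mul]

include hw in
lemma coeff_substInto (G : PowerSeries ℂ) (N : ℕ) :
    coeff N (PowerSeries.substInto w G)
      = ∑ m ∈ range (N + 1), coeff m G * coeff N (w ^ m) := by
  have := coeff_substInto_mul hw G 1 N
  simpa using this

include hw in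
lemma substInto_mul (G H : PowerSeries ℂ) :
    PowerSeries.substInto w (G * H)
      = PowerSeries.substInto w G * PowerSeries.substInto w H := by
  ext N
  rw [coeff_substInto hw, coeff_substInto_mul hw]
  have rhs : ∀ m ∈ range (N + 1),
      coeff m G * coeff N (w ^ m * PowerSeries.substInto w H)
        = ∑ l ∈ range (N + 1), coeff m G * coeff l H * coeff N (w ^ (m + l)) := by
    intro m _
    rw [mul_comm (w ^ m), coeff_substInto_mul hw, Finset.mul_sum]
    refine Finset.sum_congr rfl fun l _ => ?_
    rw [mul_comm (w ^ l), ← pow_add]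
    ring
  rw [Finset.sum_congr rfl rhs]
  -- LHS: ∑_{p ≤ N} (GH)_p coeff_N w^p
  have lhs : ∀ p ∈ range (N + 1),
      coeff p (G * H) * coeff N (w ^ p)
        = ∑ q ∈ HasAntidiagonal.antidiagonal p, coeff q.1 G * coeff q.2 H * coeff N (w ^ (q.1 + q.2)) := by
    intro p _
    rw [coeff_mul, Finset.sum_mul]
    refine Finset.sum_congr rfl ?_
    rintro ⟨x, y⟩ hxy
    rw [HasAntidiagonal.mem_antidiagonal] at hxy
    simp [hxy]
  rw [Finset.sum_congr rfl lhs]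
  -- now triangle vs square
  set F : ℕ → ℕ → ℂ := fun m l => coeff m G * coeff l H * coeff N (w ^ (m + l)) with hF
  have hFzero : ∀ m l : ℕ, N < m + l → F m l = 0 := by
    intro m l h
    simp only [hF, coeff_pow_eq_zero hw h, mul_zero]
  calc ∑ p ∈ range (N + 1), ∑ q ∈ HasAntidiagonal.antidiagonal p, F q.1 q.2
      = ∑ p ∈ range (N + 1), ∑ m ∈ range (N + 1), if m ≤ p then F m (p - m) else 0 := by
        refine Finset.sum_congr rfl fun p hp => ?_
        rw [Finset.mem_range] at hp
        rw [Finset.Nat.sum_antidiagonal_eq_sum_range_succ_mk, ← Finset.sum_filter]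
        refine Finset.sum_congr ?_ (fun _ _ => rfl)
        ext m
        simp only [Finset.mem_filter, Finset.mem_range]
        omega
    _ = ∑ m ∈ range (N + 1), ∑ p ∈ range (N + 1), if m ≤ p then F m (p - m) else 0 :=
        Finset.sum_comm
    _ = ∑ m ∈ range (N + 1), ∑ l ∈ range (N + 1), F m l := by
        refine Finset.sum_congr rfl fun m hm => ?_
        rw [Finset.mem_range] at hm
        rw [← Finset.sum_filter]
        have hfil : Finset.filter (fun p => m ≤ p) (range (N + 1)) = Finset.Ico m (N + 1) := by
          ext p
          simp only [Finset.mem_filter, Finset.mem_range, Finset.mem_Ico]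
          omega
        rw [hfil, Finset.sum_Ico_eq_sum_range]
        have h2 : ∀ i ∈ range (N + 1 - m), F m (m + i - m) = F m i := by
          intro i _; congr 1; omega
        rw [Finset.sum_congr rfl h2]
        refine Finset.sum_subset (Finset.range_subset_range.mpr (by omega)) ?_
        intro l _ hl
        rw [Finset.mem_range, not_lt] at hl
        exact hFzero m l (by omega)


include hw in
lemma substInto_one : PowerSeries.substInto w 1 = 1 := by
  ext N
  rw [PowerSeries.substInto, coeff_mk]
  rw [Finset.sum_eq_single 0]
  · simp
  · intro m _ hm
    rw [coeff_one, if_neg hm, zero_mul]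
  · simp

include hw in
lemma substInto_pow (G : PowerSeries ℂ) (k : ℕ) :
    PowerSeries.substInto w (G ^ k) = (PowerSeries.substInto w G) ^ k := by
  induction k with
  | zero => simpa using substInto_one hw
  | succ k ih => rw [pow_succ, pow_succ, substInto_mul hw, ih]

include hw in
lemma constantCoeff_substInto (G : PowerSeries ℂ) :
    constantCoeff (PowerSeries.substInto w G) = coeff 0 G := by
  rw [← coeff_zero_eq_constantCoeff_apply, PowerSeries.substInto, coeff_mk]
  simp

include hw in
/-- formal chain rule -/
lemma derivative_substInto (G : PowerSeries ℂ) :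
    d⁄dX ℂ (PowerSeries.substInto w G)
      = PowerSeries.substInto w (d⁄dX ℂ G) * d⁄dX ℂ w := by
  ext n
  rw [coeff_derivative, coeff_substInto_mul hw]
  rw [PowerSeries.substInto, coeff_mk, Finset.sum_mul]
  have key : ∀ k ∈ range (n + 2),
      coeff k G * coeff (n + 1) (w ^ k) * ((n : ℂ) + 1)
        = coeff k G * (k : ℂ) * coeff n (w ^ (k - 1) * d⁄dX ℂ w) := by
    intro k _
    have hder : coeff n (d⁄dX ℂ (w ^ k)) = coeff (n+1) (w ^ k) * ((n : ℂ) + 1) :=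
      coeff_derivative _ n
    have hpow : d⁄dX ℂ (w ^ k) = (k : ℂ) • (w ^ (k-1) * d⁄dX ℂ w) := by
      rw [Derivation.leibniz_pow]
      simp [smul_smul, Nat.cast_smul_eq_nsmul]
    rw [mul_assoc, ← hder, hpow]
    simp [mul_comm, mul_assoc, mul_left_comm]
  rw [Finset.sum_congr rfl key]
  -- reindex k = m+1
  rw [Finset.sum_range_succ']
  simp only [Nat.cast_zero, mul_zero, zero_mul, add_zero, Nat.add_sub_cancel]
  refine Finset.sum_congr rfl fun m _ => ?_
  rw [coeff_derivative]
  push_cast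
  ring

lemma derivative_exp' : d⁄dX ℂ (PowerSeries.exp ℂ) = PowerSeries.exp ℂ := by
  ext n
  rw [coeff_derivative, coeff_exp, coeff_exp]
  have : ((1 : ℚ) / ((n + 1).factorial : ℚ)) * ((n : ℚ) + 1) = 1 / (n.factorial : ℚ) := by
    rw [Nat.factorial_succ]
    have h1 : ((n.factorial : ℚ)) ≠ 0 := Nat.cast_ne_zero.mpr (Nat.factorial_ne_zero n)
    have h2 : ((n : ℚ) + 1) ≠ 0 := by positivity
    push_cast
    field_simp
  rw [show ((n:ℂ) + 1) = algebraMap ℚ ℂ ((n : ℚ) + 1) by simp]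
  rw [← map_mul, this]


section Main
variable (g : PowerSeries ℂ) (hg : constantCoeff g = 1)

local notation "w" => wS g
local notation "u" => PowerSeries.substInto (wS g) g
local notation "v" => (PowerSeries.substInto (wS g) g)⁻¹
local notation "dw" => d⁄dX ℂ (wS g)

include hg

lemma hu0 : constantCoeff u = 1 := by
  rw [constantCoeff_substInto (constantCoeff_wS g), coeff_zero_eq_constantCoeff_apply, hg]

lemma huv : u * v = 1 := PowerSeries.mul_inv_cancel _ (by rw [hu0 g hg]; exact one_ne_zero)

lemma hwv : w * v = X := by
  nth_rewrite 1 [wS_eq g]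
  rw [mul_assoc, huv g hg, mul_one]

lemma hderiv1 : v * dw + w * d⁄dX ℂ v = 1 := by
  have h := congrArg (d⁄dX ℂ) (hwv g hg)
  rw [derivative_X, Derivation.leibniz, smul_eq_mul, smul_eq_mul] at h
  linear_combination h

lemma L1zero (b : ℕ) : coeff (b + 1) (v ^ (b + 2) * dw) = 0 := by
  have h1 : d⁄dX ℂ (v ^ (b + 1)) = ((b+1 : ℕ) : PowerSeries ℂ) * (v ^ b * d⁄dX ℂ v) := by
    rw [Derivation.leibniz_pow]
    simp only [Nat.add_sub_cancel, smul_eq_mul, nsmul_eq_mul]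
  have key : ((b+1 : ℕ) : PowerSeries ℂ) * (v ^ (b + 2) * dw) + X * d⁄dX ℂ (v ^ (b + 1))
      = ((b+1 : ℕ) : PowerSeries ℂ) * v ^ (b + 1) := by
    rw [h1]
    linear_combination (((b+1 : ℕ) : PowerSeries ℂ) * v ^ (b+1)) * hderiv1 g hg
      - (((b+1 : ℕ) : PowerSeries ℂ) * (v ^ b * d⁄dX ℂ v)) * hwv g hg
  have hco := congrArg (coeff (b + 1)) key
  have hC : ((b+1 : ℕ) : PowerSeries ℂ) = C ((b+1 : ℕ) : ℂ) := by
    simp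
  rw [hC] at hco
  rw [map_add, coeff_C_mul, coeff_C_mul, coeff_succ_X_mul, coeff_derivative] at hco
  have hb : ((b:ℂ) + 1) ≠ 0 := Nat.cast_add_one_ne_zero b
  have h0 : ((b:ℂ) + 1) * coeff (b + 1) (v ^ (b + 2) * dw) = 0 := by
    push_cast at hco
    linear_combination hco
  exact (mul_eq_zero.mp h0).resolve_left hb

lemma hw1 : coeff 1 w = 1 := by
  nth_rewrite 1 [wS_eq g]
  rw [show (1:ℕ) = 0 + 1 from rfl, coeff_succ_X_mul, coeff_zero_eq_constantCoeff_apply,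
    constantCoeff_substInto (constantCoeff_wS g), coeff_zero_eq_constantCoeff_apply, hg]

lemma L1one : coeff 0 (v * dw) = 1 := by
  rw [coeff_zero_eq_constantCoeff_apply, map_mul, PowerSeries.constantCoeff_inv, hu0 g hg]
  rw [← coeff_zero_eq_constantCoeff_apply, coeff_derivative, hw1 g hg]
  norm_num

lemma termL {N m : ℕ} (hm : m ≤ N) :
    coeff N (w ^ m * ((v) ^ (N + 1) * dw)) = if m = N then 1 else 0 := by
  have hNm : m + (N + 1 - m) = N + 1 := by omega
  have hsplit : w ^ m * ((v) ^ (N + 1) * dw) = X ^ m * ((v) ^ (N + 1 - m) * dw) := by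
    have h2 : (w * v) ^ m * (v) ^ (N + 1 - m) = w ^ m * (v) ^ (N + 1) := by
      rw [mul_pow, mul_assoc, ← pow_add, hNm]
    rw [← mul_assoc, ← h2, hwv g hg, mul_assoc]
  rw [hsplit, coeff_X_pow_mul', if_pos hm]
  rcases eq_or_lt_of_le hm with heq | hlt
  · subst heq
    rw [show m + 1 - m = 1 from by omega, pow_one, Nat.sub_self, if_pos rfl]
    exact L1one g hg
  · rw [if_neg (by omega), show N + 1 - m = (N - m - 1) + 2 from by omega,
      show N - m = (N - m - 1) + 1 from by omega]
    exact L1zero g hg _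

lemma master (N p : ℕ) :
    coeff N (PowerSeries.substInto (wS g) (g ^ p) * ((v) ^ (N + 1) * dw))
      = coeff N (g ^ p) := by
  rw [coeff_substInto_mul (constantCoeff_wS g)]
  have hterm : ∀ m ∈ range (N + 1),
      coeff m (g ^ p) * coeff N (w ^ m * ((v) ^ (N + 1) * dw))
        = if m = N then coeff N (g ^ p) else 0 := by
    intro m hm
    rw [Finset.mem_range] at hm
    rw [termL g hg (by omega)]
    by_cases h : m = N
    · subst h; simp
    · simp [h]
  rw [Finset.sum_congr rfl hterm, Finset.sum_ite_eq' (range (N + 1)) N]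
  rw [if_pos (Finset.mem_range.mpr (by omega))]

lemma hupow (p : ℕ) : u ^ p * (v) ^ p = 1 := by
  rw [← mul_pow, huv g hg, one_pow]

lemma lagA (n : ℕ) :
    coeff n (g ^ (n + 1)) = coeff (n + 1) w * ((n : ℂ) + 1) := by
  have h := master g hg n (n + 1)
  rw [substInto_pow (constantCoeff_wS g)] at h
  have h2 : u ^ (n+1) * ((v) ^ (n + 1) * dw) = dw := by
    rw [← mul_assoc, hupow g hg, one_mul]
  rw [h2] at h
  rw [← h, coeff_derivative]

lemma lagC : v * dw = PowerSeries.mk fun n => coeff n (g ^ n) := by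
  ext n
  have h := master g hg n n
  rw [substInto_pow (constantCoeff_wS g)] at h
  have h2 : u ^ n * ((v) ^ (n + 1) * dw) = (u ^ n * (v) ^ n) * (v * dw) := by
    rw [pow_succ]; ring
  rw [h2, hupow g hg, one_mul] at h
  rw [coeff_mk, ← h]

lemma odeW : X * dw = w * (v * dw) := by
  rw [← mul_assoc, hwv g hg]

end Main

lemma ode_unique {P Q Cc : PowerSeries ℂ} (hC : coeff 0 Cc = 1)
    (hP : X * d⁄dX ℂ P = P * Cc) (hQ : X * d⁄dX ℂ Q = Q * Cc)
    (h0 : coeff 0 P = coeff 0 Q) (h1 : coeff 1 P = coeff 1 Q) : P = Q := by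
  ext n
  induction n using Nat.strong_induction_on with
  | _ n ih =>
    match n, ih with
    | 0, _ => exact h0
    | 1, _ => exact h1
    | (n+2), ih =>
      have key : ∀ T : PowerSeries ℂ, X * d⁄dX ℂ T = T * Cc →
          coeff (n+2) T * ((n : ℂ) + 2)
            = (∑ k ∈ range (n+2), coeff k T * coeff (n+2-k) Cc) + coeff (n+2) T := by
        intro T hT
        have h := congrArg (coeff (n+2)) hT
        rw [coeff_succ_X_mul, coeff_derivative, coeff_mul,
          Finset.Nat.sum_antidiagonal_eq_sum_range_succ_mk, Finset.sum_range_succ] at h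
        rw [Nat.sub_self, hC, mul_one] at h
        push_cast at h ⊢
        linear_combination h
      have hPk := key P hP
      have hQk := key Q hQ
      have hsum : (∑ k ∈ range (n+2), coeff k P * coeff (n+2-k) Cc)
          = ∑ k ∈ range (n+2), coeff k Q * coeff (n+2-k) Cc := by
        refine Finset.sum_congr rfl fun k hk => ?_
        rw [Finset.mem_range] at hk
        rw [ih k (by omega)]
      rw [hsum] at hPk
      have hfin : (coeff (n+2) P - coeff (n+2) Q) * ((n : ℂ) + 1) = 0 := by
        linear_combination hPk - hQk
      have hne : ((n : ℂ) + 1) ≠ 0 := Nat.cast_add_one_ne_zero n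
      have := mul_eq_zero.mp hfin
      rcases this with h | h
      · linear_combination h
      · exact absurd h hne


lemma main_ps (g : PowerSeries ℂ) (hg : constantCoeff g = 1) :
    (PowerSeries.X : PowerSeries ℂ) *
        PowerSeries.expAt
          (PowerSeries.mk fun k =>
            if k = 0 then 0 else ((k : ℂ))⁻¹ * coeff k (g ^ k)) =
      PowerSeries.mk fun k =>
        if k = 0 then 0 else ((k : ℂ))⁻¹ * coeff (k - 1) (g ^ k) := by
  set A : PowerSeries ℂ :=
    PowerSeries.mk fun k => if k = 0 then 0 else ((k : ℂ))⁻¹ * coeff k (g ^ k) with hA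
  set E : PowerSeries ℂ := PowerSeries.expAt A with hE
  set Cser : PowerSeries ℂ := PowerSeries.mk fun n => coeff n (g ^ n) with hCser
  have hA0 : constantCoeff A = 0 := by
    rw [← coeff_zero_eq_constantCoeff_apply, hA, coeff_mk, if_pos rfl]
  have hC0 : coeff 0 Cser = 1 := by
    rw [hCser, coeff_mk, pow_zero, coeff_zero_eq_constantCoeff_apply, map_one]
  have hEdef : E = PowerSeries.substInto A (PowerSeries.exp ℂ) := rfl
  have hdE : d⁄dX ℂ E = E * d⁄dX ℂ A := by
    rw [hEdef, derivative_substInto hA0, derivative_exp', mul_comm]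
  have hE3 : 1 + X * d⁄dX ℂ A = Cser := by
    ext n
    cases n with
    | zero =>
      rw [map_add, mul_comm X, coeff_zero_mul_X, add_zero, hC0,
        coeff_zero_eq_constantCoeff_apply, map_one]
    | succ n =>
      rw [map_add, coeff_one, if_neg (Nat.succ_ne_zero n), coeff_succ_X_mul, coeff_derivative,
        hA, coeff_mk, if_neg (Nat.succ_ne_zero n), hCser, coeff_mk, zero_add]
      have hne : ((n : ℂ) + 1) ≠ 0 := Nat.cast_add_one_ne_zero n
      push_cast
      try field_simp
      try ring
  have hODE_L : X * d⁄dX ℂ (X * E) = (X * E) * Cser := by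
    have hd : d⁄dX ℂ (X * E) = X * d⁄dX ℂ E + E := by
      rw [Derivation.leibniz, smul_eq_mul, smul_eq_mul, derivative_X, mul_one]
    rw [hd, hdE, ← hE3]
    ring
  have hODE_w : X * d⁄dX ℂ (wS g) = wS g * Cser := by
    rw [odeW g hg, lagC g hg, hCser]
  have hXE : X * E = wS g := by
    refine ode_unique hC0 hODE_L hODE_w ?_ ?_
    · rw [coeff_zero_eq_constantCoeff_apply, map_mul, constantCoeff_X, zero_mul,
        coeff_zero_eq_constantCoeff_apply, constantCoeff_wS]
    · rw [show (1:ℕ) = 0 + 1 from rfl, coeff_succ_X_mul, hw1 g hg,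
        coeff_zero_eq_constantCoeff_apply, hE, PowerSeries.expAt,
        constantCoeff_substInto hA0, coeff_zero_eq_constantCoeff_apply, constantCoeff_exp]
  rw [hXE]
  ext k
  cases k with
  | zero =>
    rw [coeff_mk, if_pos rfl, coeff_zero_eq_constantCoeff_apply, constantCoeff_wS]
  | succ k =>
    rw [coeff_mk, if_neg (Nat.succ_ne_zero k), Nat.add_sub_cancel, lagA g hg k]
    have hne : ((k : ℂ) + 1) ≠ 0 := Nat.cast_add_one_ne_zero k
    push_cast
    try field_simp
    try ring


end LagAux

/-- The formal core of Theorem 8.1: for a formal Laurent series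
`f = y⁻¹ + ∑_{k ≥ 0} f_k y^k` over `ℂ` (no coefficients below `y⁻¹`, and the
coefficient of `y⁻¹` is `1`), one has, as formal power series in `t`,
`t · exp( ∑_{k ≥ 1} (1/k)·([y^0] f^k)·t^k ) = ∑_{k ≥ 1} (1/k)·([y^{-1}] f^k)·t^k`. -/
theorem laurent_exp_const_eq_residue
    (f : LaurentSeries ℂ)
    (hlow : ∀ n : ℤ, n < -1 → f.coeff n = 0)
    (hres : f.coeff (-1) = 1) :
    PowerSeries.X *
        PowerSeries.expAt
          (PowerSeries.mk fun k =>
            if k = 0 then 0 else ((k : ℂ))⁻¹ * (f ^ k).coeff 0) =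
      PowerSeries.mk fun k =>
        if k = 0 then 0 else ((k : ℂ))⁻¹ * (f ^ k).coeff (-1) := by
  have hf0 : f ≠ 0 := by
    intro h
    rw [h] at hres
    simp at hres
  have horder : f.order = -1 := by
    have hle : f.order ≤ -1 :=
      HahnSeries.order_le_of_coeff_ne_zero (by rw [hres]; exact one_ne_zero)
    rcases lt_or_eq_of_le hle with hlt | heq
    · exact absurd (hlow f.order hlt) (mt HahnSeries.coeff_order_eq_zero.mp hf0)
    · exact heq
  set g : PowerSeries ℂ := f.powerSeriesPart with hgdef
  have hg : PowerSeries.constantCoeff g = 1 := by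
    rw [← PowerSeries.coeff_zero_eq_constantCoeff_apply, hgdef,
      LaurentSeries.powerSeriesPart_coeff, horder]
    simpa using hres
  have hfg : f = HahnSeries.single (-1 : ℤ) (1 : ℂ) * (g : LaurentSeries ℂ) := by
    conv_lhs => rw [← LaurentSeries.single_order_mul_powerSeriesPart f]
    rw [horder]
  have hpow : ∀ k : ℕ, f ^ k
      = HahnSeries.single (-(k : ℤ)) (1 : ℂ) * ((g ^ k : PowerSeries ℂ) : LaurentSeries ℂ) := by
    intro k
    rw [hfg, mul_pow, HahnSeries.single_pow, one_pow, ← map_pow,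
      show (k • (-1 : ℤ)) = -(k : ℤ) by simp]
  have hc0 : ∀ k : ℕ, (f ^ k).coeff 0 = PowerSeries.coeff k (g ^ k) := by
    intro k
    rw [hpow k, show (0 : ℤ) = (k : ℤ) + (-(k : ℤ)) by ring, HahnSeries.coeff_single_mul_add,
      one_mul, LaurentSeries.coeff_coe_powerSeries]
  have hcm1 : ∀ k : ℕ, k ≠ 0 → (f ^ k).coeff (-1) = PowerSeries.coeff (k - 1) (g ^ k) := by
    intro k hk
    rw [hpow k, show (-1 : ℤ) = ((k - 1 : ℕ) : ℤ) + (-(k : ℤ)) by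
        rw [Int.natCast_sub (by omega)]; push_cast; ring,
      HahnSeries.coeff_single_mul_add, one_mul, LaurentSeries.coeff_coe_powerSeries]
  have hA : (PowerSeries.mk fun k => if k = 0 then 0 else ((k : ℂ))⁻¹ * (f ^ k).coeff 0)
      = PowerSeries.mk fun k =>
          if k = 0 then 0 else ((k : ℂ))⁻¹ * PowerSeries.coeff k (g ^ k) := by
    ext n
    rw [PowerSeries.coeff_mk, PowerSeries.coeff_mk, hc0 n]
  have hB : (PowerSeries.mk fun k => if k = 0 then 0 else ((k : ℂ))⁻¹ * (f ^ k).coeff (-1))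
      = PowerSeries.mk fun k =>
          if k = 0 then 0 else ((k : ℂ))⁻¹ * PowerSeries.coeff (k - 1) (g ^ k) := by
    ext n
    rw [PowerSeries.coeff_mk, PowerSeries.coeff_mk]
    by_cases h : n = 0
    · simp [h]
    · rw [if_neg h, if_neg h, hcm1 n h]
  rw [hA, hB]
  exact LagAux.main_ps g hg
end
end

section
/- Let R = ℂ[ℤ²] be the ring of complex Laurent polynomials in two variables (the group algebra of ℤ² over ℂ, with monomials x^v for v ∈ ℤ²), and let K be its field of fractions. Let w : ℤ² → ℤ be a group homomorphism and let a ∈ R be a nonzero Laurent polynomial whose support is contained in ker w = {v ∈ ℤ² : w(v) = 0}. Then there exists a field automorphism φ of K such that φ(x^v) = x^v · a^{w(v)} for every v ∈ ℤ², where a^{w(v)} is the (possibly negative) integer power of a computed in K using that a is invertible in K. -/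
noncomputable section

/-- The ring of complex Laurent polynomials in two variables, as the group algebra `ℂ[ℤ²]`. -/
abbrev LaurentℤSq : Type := AddMonoidAlgebra ℂ (ℤ × ℤ)

instance : IsDomain LaurentℤSq := NoZeroDivisors.to_isDomain _

/-- The fraction field of `ℂ[ℤ²]`, i.e. the field of rational functions `ℂ(ℤ²)`. -/
abbrev FracLaurentℤSq : Type := FractionRing LaurentℤSq

namespace MutationAux

open AddMonoidAlgebra

variable (a : LaurentℤSq)

/-- The localization of `ℂ[ℤ²]` away from `a`. -/
abbrev Rloc : Type := Localization.Away a

/-- The image of `a` in the localization, as a unit. -/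
def aUnit : (Rloc a)ˣ :=
  (IsLocalization.Away.algebraMap_isUnit (S := Rloc a) a).unit

lemma aUnit_val : (aUnit a : Rloc a) = algebraMap LaurentℤSq (Rloc a) a := rfl

/-- The monoid homomorphism `v ↦ x^v · a^{w v}` into the localization. -/
def gmap (w : ℤ × ℤ →+ ℤ) : Multiplicative (ℤ × ℤ) →* Rloc a where
  toFun v := algebraMap LaurentℤSq (Rloc a) (AddMonoidAlgebra.single v.toAdd 1) *
    ↑(aUnit a ^ w v.toAdd)
  map_one' := by
    simp only [toAdd_one, map_zero, zpow_zero, Units.val_one, mul_one]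
    rw [← AddMonoidAlgebra.one_def, map_one]
  map_mul' x y := by
    simp only [toAdd_mul, map_add, zpow_add, Units.val_mul]
    rw [show (AddMonoidAlgebra.single (x.toAdd + y.toAdd) (1 : ℂ)) =
        AddMonoidAlgebra.single x.toAdd 1 * AddMonoidAlgebra.single y.toAdd 1 by
      rw [AddMonoidAlgebra.single_mul_single, one_mul], map_mul]
    ring

/-- The ring homomorphism `ℂ[ℤ²] → Rloc a` sending `x^v ↦ x^v a^{w v}`. -/
def fhom (w : ℤ × ℤ →+ ℤ) : LaurentℤSq →+* Rloc a :=
  AddMonoidAlgebra.liftNCRingHom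
    ((algebraMap LaurentℤSq (Rloc a)).comp (algebraMap ℂ LaurentℤSq))
    (gmap a w) (fun _ _ => Commute.all _ _)

lemma fhom_single (w : ℤ × ℤ →+ ℤ) (v : ℤ × ℤ) (c : ℂ) :
    fhom a w (AddMonoidAlgebra.single v c) =
      algebraMap LaurentℤSq (Rloc a) (AddMonoidAlgebra.single v c) * ↑(aUnit a ^ w v) := by
  show AddMonoidAlgebra.liftNC _ _ _ = _
  rw [AddMonoidAlgebra.liftNC_single]
  show (algebraMap LaurentℤSq (Rloc a)) ((algebraMap ℂ LaurentℤSq) c) *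
      (algebraMap LaurentℤSq (Rloc a) (AddMonoidAlgebra.single v 1) * ↑(aUnit a ^ w v)) = _
  rw [← mul_assoc, ← map_mul]
  congr 2
  rw [AddMonoidAlgebra.coe_algebraMap]
  show AddMonoidAlgebra.single 0 ((algebraMap ℂ ℂ) c) * AddMonoidAlgebra.single v 1 = _
  rw [AddMonoidAlgebra.single_mul_single, zero_add, mul_one]
  simp

lemma fhom_a' (w : ℤ × ℤ →+ ℤ) (b : LaurentℤSq) (hs : ∀ v ∈ b.coeff.support, w v = 0) :
    fhom a w b = algebraMap LaurentℤSq (Rloc a) b := by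
  conv_lhs => rw [← AddMonoidAlgebra.sum_coeff_single b]
  rw [map_finsuppSum]
  rw [show (algebraMap LaurentℤSq (Rloc a)) b
      = b.coeff.sum fun v c => algebraMap LaurentℤSq (Rloc a) (AddMonoidAlgebra.single v c) by
    rw [← map_finsuppSum]; congr 1; exact (AddMonoidAlgebra.sum_coeff_single b).symm]
  apply Finsupp.sum_congr
  intro v hv
  rw [fhom_single, hs v hv, zpow_zero, Units.val_one, mul_one]

lemma fhom_a (w : ℤ × ℤ →+ ℤ) (hs : ∀ v ∈ a.coeff.support, w v = 0) :
    fhom a w a = algebraMap LaurentℤSq (Rloc a) a :=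
  fhom_a' a w a hs

lemma fhom_a_isUnit (w : ℤ × ℤ →+ ℤ) (hs : ∀ v ∈ a.coeff.support, w v = 0) :
    IsUnit (fhom a w a) := by
  rw [fhom_a a w hs]; exact (aUnit a).isUnit

/-- The induced endomorphism of the localization. -/
def Fmap (w : ℤ × ℤ →+ ℤ) (hs : ∀ v ∈ a.coeff.support, w v = 0) : Rloc a →+* Rloc a :=
  IsLocalization.Away.lift a (fhom_a_isUnit a w hs)

lemma Fmap_alg (w : ℤ × ℤ →+ ℤ) (hs : ∀ v ∈ a.coeff.support, w v = 0) (r : LaurentℤSq) :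
    Fmap a w hs (algebraMap LaurentℤSq (Rloc a) r) = fhom a w r :=
  IsLocalization.Away.lift_eq a _ r

lemma Fmap_unit (w : ℤ × ℤ →+ ℤ) (hs : ∀ v ∈ a.coeff.support, w v = 0) (n : ℤ) :
    Fmap a w hs ↑(aUnit a ^ n) = ↑(aUnit a ^ n) := by
  have h1 : Units.map (Fmap a w hs).toMonoidHom (aUnit a) = aUnit a := by
    ext
    rw [Units.coe_map]
    show Fmap a w hs (aUnit a : Rloc a) = (aUnit a : Rloc a)
    rw [aUnit_val, Fmap_alg, fhom_a a w hs]
  calc Fmap a w hs ↑(aUnit a ^ n)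
      = ↑(Units.map (Fmap a w hs).toMonoidHom (aUnit a ^ n)) := by rw [Units.coe_map]; rfl
    _ = ↑((Units.map (Fmap a w hs).toMonoidHom (aUnit a)) ^ n) := by rw [map_zpow]
    _ = ↑(aUnit a ^ n) := by rw [h1]

lemma Fmap_cancel (w w' : ℤ × ℤ →+ ℤ) (hs : ∀ v ∈ a.coeff.support, w v = 0)
    (hs' : ∀ v ∈ a.coeff.support, w' v = 0) (h0 : ∀ v, w v + w' v = 0) :
    (Fmap a w hs).comp (Fmap a w' hs') = RingHom.id (Rloc a) := by
  apply IsLocalization.ringHom_ext (Submonoid.powers a)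
  rw [RingHom.comp_assoc]
  rw [show (Fmap a w' hs').comp (algebraMap LaurentℤSq (Rloc a)) = fhom a w' from
    IsLocalization.Away.lift_comp a _]
  apply AddMonoidAlgebra.ringHom_ext
  · intro c
    rw [RingHom.comp_apply, fhom_single, map_zero, zpow_zero, Units.val_one, mul_one,
      Fmap_alg, fhom_single, map_zero, zpow_zero, Units.val_one, mul_one, RingHom.comp_apply,
      RingHom.id_apply]
  · intro v
    rw [RingHom.comp_apply, fhom_single, map_mul, Fmap_alg, Fmap_unit, fhom_single,
      mul_assoc, ← Units.val_mul, ← zpow_add, h0 v, zpow_zero, Units.val_one, mul_one,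
      RingHom.comp_apply, RingHom.id_apply]

end MutationAux

open MutationAux

/-- **Mutations are field automorphisms** (Definition 9.1): given a group homomorphism
`w : ℤ² → ℤ` and a nonzero Laurent polynomial `a ∈ ℂ[ℤ²]` supported on `ker w`, there is a
field automorphism `φ` of the fraction field `K = Frac(ℂ[ℤ²])` with
`φ(x^v) = x^v · a^{w(v)}` for every `v ∈ ℤ²`. -/
theorem mutation_is_field_automorphism
    (w : ℤ × ℤ →+ ℤ) (a : LaurentℤSq) (ha : a ≠ 0)
    (hsupp : ∀ v ∈ a.coeff.support, w v = 0) :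
    ∃ φ : FracLaurentℤSq ≃+* FracLaurentℤSq,
      ∀ v : ℤ × ℤ,
        φ (algebraMap LaurentℤSq FracLaurentℤSq (AddMonoidAlgebra.single v 1)) =
          algebraMap LaurentℤSq FracLaurentℤSq (AddMonoidAlgebra.single v 1) *
            (algebraMap LaurentℤSq FracLaurentℤSq a) ^ (w v) := by
  set K := FracLaurentℤSq
  have hsupp' : ∀ v ∈ a.coeff.support, (-w) v = 0 := fun v hv => by
    simp [hsupp v hv]
  set E : Rloc a ≃+* Rloc a := RingEquiv.ofRingHom (Fmap a w hsupp) (Fmap a (-w) hsupp')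
    (Fmap_cancel a w (-w) hsupp hsupp' (fun v => by simp))
    (Fmap_cancel a (-w) w hsupp' hsupp (fun v => by simp)) with hE
  have hKa : IsUnit (algebraMap LaurentℤSq K a) := by
    rw [isUnit_iff_ne_zero]
    exact (map_ne_zero_iff _ (IsFractionRing.injective LaurentℤSq K)).mpr ha
  letI : Algebra (Rloc a) K := (IsLocalization.Away.lift a hKa).toAlgebra
  haveI : IsScalarTower LaurentℤSq (Rloc a) K :=
    IsScalarTower.of_algebraMap_eq'
      (show algebraMap LaurentℤSq K =
          (algebraMap (Rloc a) K).comp (algebraMap LaurentℤSq (Rloc a)) from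
        (IsLocalization.Away.lift_comp a hKa).symm)
  haveI : IsFractionRing (Rloc a) K :=
    IsFractionRing.isFractionRing_of_isDomain_of_isLocalization (Submonoid.powers a) (Rloc a) K
  refine ⟨IsFractionRing.ringEquivOfRingEquiv (K := K) (L := K) E, fun v => ?_⟩
  rw [IsScalarTower.algebraMap_apply LaurentℤSq (Rloc a) K (AddMonoidAlgebra.single v 1),
    IsFractionRing.ringEquivOfRingEquiv_algebraMap]
  have hEv : E (algebraMap LaurentℤSq (Rloc a) (AddMonoidAlgebra.single v 1)) =
      algebraMap LaurentℤSq (Rloc a) (AddMonoidAlgebra.single v 1) * ↑(aUnit a ^ w v) := by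
    rw [hE]
    show Fmap a w hsupp _ = _
    rw [Fmap_alg, fhom_single]
  rw [hEv, map_mul, ← IsScalarTower.algebraMap_apply]
  congr 1
  calc algebraMap (Rloc a) K ↑(aUnit a ^ w v)
      = ↑(Units.map (algebraMap (Rloc a) K).toMonoidHom (aUnit a ^ w v)) := by
        rw [Units.coe_map]; rfl
    _ = ↑((Units.map (algebraMap (Rloc a) K).toMonoidHom (aUnit a)) ^ w v) := by rw [map_zpow]
    _ = (↑(Units.map (algebraMap (Rloc a) K).toMonoidHom (aUnit a)) : K) ^ w v := by
        rw [Units.val_zpow_eq_zpow_val]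
    _ = (algebraMap LaurentℤSq K a) ^ w v := by
        rw [Units.coe_map]
        show (algebraMap (Rloc a) K ((aUnit a : Rloc a))) ^ w v = _
        rw [aUnit_val, ← IsScalarTower.algebraMap_apply]
end
end

section
/- Let R = ℂ[ℤ²] be the ring of complex Laurent polynomials in two variables with field of fractions K. Let w : ℤ² → ℤ be a group homomorphism and a ∈ R nonzero with support contained in ker w. For f ∈ R define the mutation μ_{w,a}(f) = ∑_{v ∈ supp f} f_v · x^v · a^{w(v)} ∈ K (a finite sum, with a^{w(v)} computed in K). Suppose f, g ∈ R are Laurent polynomials such that μ_{w,a}(f) = g in K (i.e. f is mutable and g is its mutation). Then for every integer k ≥ 1 the constant terms of the k-th powers agree: const(f^k) = const(g^k). Consequently the classical periods coincide: π_f = π_g. -/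
noncomputable section

/-- The mutation `μ_{w,a}(f) = ∑_{v ∈ supp f} f_v · x^v · a^{w(v)}`, computed in the
fraction field of `ℂ[ℤ²]`. -/
def mutation (w : ℤ × ℤ →+ ℤ) (a : LaurentℤSq) (f : LaurentℤSq) : FracLaurentℤSq :=
  ∑ v ∈ f.coeff.support,
    algebraMap LaurentℤSq FracLaurentℤSq (AddMonoidAlgebra.single v (f.coeff v)) *
      (algebraMap LaurentℤSq FracLaurentℤSq a) ^ (w v)

/-- The classical period `π_f(t) = ∑_{k > 0} const(f^k) t^k` of a Laurent polynomial. -/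
def classicalPeriod (f : LaurentℤSq) : PowerSeries ℂ :=
  PowerSeries.mk fun k => if k = 0 then 0 else (f ^ k).coeff (0 : ℤ × ℤ)

/-- Projection onto the weight-zero part (for the weight `w`). -/
def wfilter (w : ℤ × ℤ →+ ℤ) (x : LaurentℤSq) : LaurentℤSq :=
  AddMonoidAlgebra.ofCoeff (Finsupp.filter (fun v => w v = 0) x.coeff)

/-- Projection onto the nonzero-weight part (for the weight `w`). -/
def wfilterN (w : ℤ × ℤ →+ ℤ) (x : LaurentℤSq) : LaurentℤSq :=
  AddMonoidAlgebra.ofCoeff (Finsupp.filter (fun v => ¬ w v = 0) x.coeff)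

theorem wfilter_add (w : ℤ × ℤ →+ ℤ) (x y : LaurentℤSq) :
    wfilter w (x + y) = wfilter w x + wfilter w y :=
  congrArg AddMonoidAlgebra.ofCoeff Finsupp.filter_add

theorem wfilter_sum {β : Type*} (w : ℤ × ℤ →+ ℤ) (s : Finset β) (F : β → LaurentℤSq) :
    wfilter w (∑ b ∈ s, F b) = ∑ b ∈ s, wfilter w (F b) := by
  classical
  induction s using Finset.induction_on with
  | empty => simp [wfilter, Finsupp.filter_zero]
  | insert _ _ hb ih =>
      rw [Finset.sum_insert hb, Finset.sum_insert hb, wfilter_add, ih]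

open AddMonoidAlgebra Finsupp in
/-- Products against weight-zero elements: if every support element of `x` has weight
satisfying `P`, and `y` is supported on `ker w`, then every support element of `x*y` has
weight satisfying `P`. -/
theorem weight_mul_mem (w : ℤ × ℤ →+ ℤ) {P : ℤ → Prop} {x y : LaurentℤSq}
    (hx : ∀ v ∈ x.coeff.support, P (w v)) (hy : ∀ v ∈ y.coeff.support, w v = 0) :
    ∀ v ∈ (x * y).coeff.support, P (w v) := by
  classical
  intro v hv
  have hmem := AddMonoidAlgebra.support_coeff_mul_subset x y hv
  rcases Finset.mem_add.1 hmem with ⟨v₁, h₁, v₂, h₂, rfl⟩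
  have : w (v₁ + v₂) = w v₁ := by rw [map_add, hy v₂ h₂, add_zero]
  rw [this]; exact hx v₁ h₁

open AddMonoidAlgebra in
theorem weight_pow (w : ℤ × ℤ →+ ℤ) (a : LaurentℤSq)
    (hsupp : ∀ v ∈ a.coeff.support, w v = 0) (m : ℕ) :
    ∀ v ∈ (a ^ m).coeff.support, w v = 0 := by
  induction m with
  | zero =>
      intro v hv
      rw [pow_zero] at hv
      have : v ∈ ({0} : Finset (ℤ × ℤ)) := by
        have h1 : (1 : LaurentℤSq) = AddMonoidAlgebra.single 0 1 := rfl
        rw [h1] at hv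
        exact Finsupp.support_single_subset hv
      simp only [Finset.mem_singleton] at this
      rw [this, map_zero]
  | succ n ih =>
      intro v hv
      rw [pow_succ] at hv
      exact weight_mul_mem w (P := fun n => n = 0) ih hsupp v hv

open AddMonoidAlgebra Finsupp in
/-- Filtering the weight-zero part commutes with multiplication by powers of `a`. -/
theorem filter_mul_pow (w : ℤ × ℤ →+ ℤ) (a : LaurentℤSq)
    (hsupp : ∀ v ∈ a.coeff.support, w v = 0) (x : LaurentℤSq) (m : ℕ) :
    wfilter w (x * a ^ m) = wfilter w x * a ^ m := by
  classical
  have hx : wfilter w x + wfilterN w x = x :=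
    congrArg AddMonoidAlgebra.ofCoeff (Finsupp.filter_pos_add_filter_neg x.coeff (fun v => w v = 0))
  set x₀ : LaurentℤSq := wfilter w x with hx₀
  set x₁ : LaurentℤSq := wfilterN w x with hx₁
  have hx₀supp : ∀ v ∈ x₀.coeff.support, w v = 0 := by
    intro v hv
    rw [hx₀] at hv
    have : v ∈ (Finsupp.filter (fun v => w v = 0) x.coeff).support := hv
    rw [Finsupp.support_filter] at this
    exact (Finset.mem_filter.1 this).2
  have hx₁supp : ∀ v ∈ x₁.coeff.support, ¬ w v = 0 := by
    intro v hv
    rw [hx₁] at hv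
    have : v ∈ (Finsupp.filter (fun v => ¬ w v = 0) x.coeff).support := hv
    rw [Finsupp.support_filter] at this
    exact (Finset.mem_filter.1 this).2
  have h0 : wfilter w (x₀ * a ^ m) = x₀ * a ^ m := by
    rw [wfilter, ← AddMonoidAlgebra.coeff_inj, AddMonoidAlgebra.coeff_ofCoeff, Finsupp.filter_eq_self_iff]
    intro v hv
    exact weight_mul_mem w (P := fun n => n = 0) hx₀supp (weight_pow w a hsupp m) v
      (Finsupp.mem_support_iff.2 hv)
  have h1 : wfilter w (x₁ * a ^ m) = 0 := by
    rw [wfilter, AddMonoidAlgebra.ofCoeff_eq_zero, Finsupp.filter_eq_zero_iff]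
    intro v hpv
    by_contra hne
    exact weight_mul_mem w (P := fun n => ¬ n = 0) hx₁supp (weight_pow w a hsupp m) v
      (Finsupp.mem_support_iff.2 (by simpa using hne)) hpv
  calc wfilter w (x * a ^ m)
      = wfilter w ((x₀ + x₁) * a ^ m) := by rw [hx]
    _ = wfilter w (x₀ * a ^ m + x₁ * a ^ m) := by rw [add_mul]
    _ = wfilter w (x₀ * a ^ m) + wfilter w (x₁ * a ^ m) := wfilter_add w _ _
    _ = x₀ * a ^ m := by rw [h0, h1, add_zero]

theorem wfilter_single_pos (w : ℤ × ℤ →+ ℤ) {v : ℤ × ℤ} (h : w v = 0) (b : ℂ) :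
    wfilter w (AddMonoidAlgebra.single v b) = AddMonoidAlgebra.single v b :=
  congrArg AddMonoidAlgebra.ofCoeff (Finsupp.filter_single_of_pos (fun v => w v = 0) h)

theorem wfilter_single_neg (w : ℤ × ℤ →+ ℤ) {v : ℤ × ℤ} (h : ¬ w v = 0) (b : ℂ) :
    wfilter w (AddMonoidAlgebra.single v b) = 0 :=
  congrArg AddMonoidAlgebra.ofCoeff (Finsupp.filter_single_of_neg (fun v => w v = 0) h)

theorem wfilter_apply_zero (w : ℤ × ℤ →+ ℤ) (x : LaurentℤSq) :
    (wfilter w x).coeff 0 = x.coeff 0 :=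
  Finsupp.filter_apply_pos _ _ (map_zero w)

open AddMonoidAlgebra Finsupp in
/-- The base case: if the mutation of `p` is the Laurent polynomial `c`, then they have the
same constant term. -/
theorem const_eq_of_mutation_eq (w : ℤ × ℤ →+ ℤ) (a : LaurentℤSq) (ha : a ≠ 0)
    (hsupp : ∀ v ∈ a.coeff.support, w v = 0) (p c : LaurentℤSq)
    (hm : mutation w a p = algebraMap LaurentℤSq FracLaurentℤSq c) :
    p.coeff 0 = c.coeff 0 := by
  classical
  set ι := algebraMap LaurentℤSq FracLaurentℤSq with hι
  have hinj : Function.Injective ι := IsFractionRing.injective _ _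
  have hιa : ι a ≠ 0 := by
    intro h
    exact ha (hinj (by rw [h, map_zero]))
  set M : ℕ := p.coeff.support.sup fun v => (w v).natAbs with hM
  have hMv : ∀ v ∈ p.coeff.support, 0 ≤ w v + M := by
    intro v hv
    have h1 : (w v).natAbs ≤ M := Finset.le_sup (f := fun v => (w v).natAbs) hv
    omega
  have key : (∑ v ∈ p.coeff.support, AddMonoidAlgebra.single v (p.coeff v) * a ^ (w v + M).toNat)
      = c * a ^ M := by
    apply hinj
    rw [map_mul, map_pow, map_sum]
    calc ∑ v ∈ p.coeff.support, ι (AddMonoidAlgebra.single v (p.coeff v) * a ^ (w v + M).toNat)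
        = ∑ v ∈ p.coeff.support, ι (AddMonoidAlgebra.single v (p.coeff v)) * (ι a) ^ (w v) * (ι a) ^ M := by
          refine Finset.sum_congr rfl fun v hv => ?_
          rw [map_mul, map_pow, mul_assoc, ← zpow_natCast (ι a) M, ← zpow_add₀ hιa,
            ← zpow_natCast (ι a) (w v + M).toNat, Int.toNat_of_nonneg (hMv v hv)]
      _ = mutation w a p * (ι a) ^ M := by
          rw [mutation, Finset.sum_mul]
      _ = ι c * (ι a) ^ M := by rw [hm]
  have hfilt : wfilter w p * a ^ M = wfilter w c * a ^ M := by
    have hkey := congrArg (wfilter w) key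
    rw [filter_mul_pow w a hsupp c M] at hkey
    rw [← hkey]
    rw [wfilter_sum]
    have hsum : ∀ v ∈ p.coeff.support,
        wfilter w (AddMonoidAlgebra.single v (p.coeff v) * a ^ (w v + M).toNat)
        = wfilter w (AddMonoidAlgebra.single v (p.coeff v)) * a ^ M := by
      intro v hv
      rw [filter_mul_pow w a hsupp]
      by_cases h0 : w v = 0
      · rw [wfilter_single_pos w h0, h0]
        norm_num
      · rw [wfilter_single_neg w h0, zero_mul, zero_mul]
    rw [Finset.sum_congr rfl hsum, ← Finset.sum_mul]
    congr 1
    rw [← wfilter_sum]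
    congr 1
    exact (AddMonoidAlgebra.sum_coeff_single p).symm
  have hpa : wfilter w p = wfilter w c :=
    mul_right_cancel₀ (pow_ne_zero M ha) hfilt
  calc p.coeff 0 = (wfilter w p).coeff 0 := (wfilter_apply_zero w p).symm
    _ = (wfilter w c).coeff 0 := by rw [hpa]
    _ = c.coeff 0 := wfilter_apply_zero w c

open AddMonoidAlgebra in
/-- The mutation, packaged as a ring homomorphism `ℂ[ℤ²] →+* Frac(ℂ[ℤ²])`. -/
def mutHom (w : ℤ × ℤ →+ ℤ) (a : LaurentℤSq) (ha : a ≠ 0) :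
    LaurentℤSq →+* FracLaurentℤSq :=
  AddMonoidAlgebra.liftNCRingHom
    ((algebraMap LaurentℤSq FracLaurentℤSq).comp (algebraMap ℂ LaurentℤSq))
    { toFun := fun v =>
        algebraMap LaurentℤSq FracLaurentℤSq (AddMonoidAlgebra.single (Multiplicative.toAdd v) 1) *
          (algebraMap LaurentℤSq FracLaurentℤSq a) ^ (w (Multiplicative.toAdd v))
      map_one' := by
        show algebraMap LaurentℤSq FracLaurentℤSq (AddMonoidAlgebra.single 0 1) *
          (algebraMap LaurentℤSq FracLaurentℤSq a) ^ (w 0) = 1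
        rw [map_zero, zpow_zero, mul_one, ← AddMonoidAlgebra.one_def, map_one]
      map_mul' := by
        intro u v
        have hιa : algebraMap LaurentℤSq FracLaurentℤSq a ≠ 0 := by
          intro h
          exact ha (IsFractionRing.injective LaurentℤSq FracLaurentℤSq (by rw [h, map_zero]))
        have hs : (AddMonoidAlgebra.single
              (Multiplicative.toAdd u + Multiplicative.toAdd v) (1 : ℂ) : LaurentℤSq)
            = AddMonoidAlgebra.single (Multiplicative.toAdd u) 1 *
              AddMonoidAlgebra.single (Multiplicative.toAdd v) 1 := by
          rw [AddMonoidAlgebra.single_mul_single, mul_one]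
        show algebraMap LaurentℤSq FracLaurentℤSq
            (AddMonoidAlgebra.single (Multiplicative.toAdd u + Multiplicative.toAdd v) 1) *
            (algebraMap LaurentℤSq FracLaurentℤSq a) ^
              (w (Multiplicative.toAdd u + Multiplicative.toAdd v))
          = (algebraMap LaurentℤSq FracLaurentℤSq
                (AddMonoidAlgebra.single (Multiplicative.toAdd u) 1) *
              (algebraMap LaurentℤSq FracLaurentℤSq a) ^ (w (Multiplicative.toAdd u))) *
            (algebraMap LaurentℤSq FracLaurentℤSq
                (AddMonoidAlgebra.single (Multiplicative.toAdd v) 1) *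
              (algebraMap LaurentℤSq FracLaurentℤSq a) ^ (w (Multiplicative.toAdd v)))
        rw [map_add, hs, map_mul, zpow_add₀ hιa]
        ring }
    (fun _ _ => Commute.all _ _)

open AddMonoidAlgebra in
theorem mutHom_eq (w : ℤ × ℤ →+ ℤ) (a : LaurentℤSq) (ha : a ≠ 0) (h : LaurentℤSq) :
    mutHom w a ha h = mutation w a h := by
  classical
  conv_lhs => rw [← AddMonoidAlgebra.sum_coeff_single h]
  rw [Finsupp.sum, map_sum, mutation]
  refine Finset.sum_congr rfl fun v hv => ?_
  show AddMonoidAlgebra.liftNC _ _ (AddMonoidAlgebra.single v (h.coeff v)) = _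
  rw [AddMonoidAlgebra.liftNC_single]
  have hsingle : AddMonoidAlgebra.single v (h.coeff v)
      = algebraMap ℂ LaurentℤSq (h.coeff v) * AddMonoidAlgebra.single v 1 := by
    rw [AddMonoidAlgebra.coe_algebraMap]
    show AddMonoidAlgebra.single v (h.coeff v)
      = AddMonoidAlgebra.single 0 (h.coeff v) * AddMonoidAlgebra.single v 1
    rw [AddMonoidAlgebra.single_mul_single, zero_add, mul_one]
  rw [hsingle, map_mul, mul_assoc]
  rfl

/-- **Mutation invariance of the classical period** (Proposition of Section 9): if the
Laurent polynomial `f` is mutable with respect to `(w, a)` — where `w : ℤ² → ℤ` is a group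
homomorphism and `a ≠ 0` is supported on `ker w` — with mutation the Laurent polynomial `g`,
then `const(f^k) = const(g^k)` for all `k ≥ 1`; consequently `π_f = π_g`. -/
theorem classicalPeriod_eq_of_mutation
    (w : ℤ × ℤ →+ ℤ) (a : LaurentℤSq) (ha : a ≠ 0)
    (hsupp : ∀ v ∈ a.coeff.support, w v = 0)
    (f g : LaurentℤSq)
    (hmut : mutation w a f = algebraMap LaurentℤSq FracLaurentℤSq g) :
    (∀ k : ℕ, 1 ≤ k → (f ^ k).coeff (0 : ℤ × ℤ) = (g ^ k).coeff (0 : ℤ × ℤ)) ∧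
      classicalPeriod f = classicalPeriod g := by
  have h1 : ∀ k : ℕ, 1 ≤ k → (f ^ k).coeff (0 : ℤ × ℤ) = (g ^ k).coeff (0 : ℤ × ℤ) := by
    intro k _
    apply const_eq_of_mutation_eq w a ha hsupp
    rw [← mutHom_eq w a ha, map_pow, mutHom_eq w a ha, hmut, ← map_pow]
  refine ⟨h1, ?_⟩
  unfold classicalPeriod
  ext n
  rw [PowerSeries.coeff_mk, PowerSeries.coeff_mk]
  by_cases hn : n = 0
  · simp [hn]
  · simp only [hn, if_false]
    exact h1 n (by omega)
end
end

section
/- Let a(z) = ∑_{k≥1} ((3k−1)!/(k!)³) z^k ∈ ℚ⟦z⟧ and let Q(z) = z·exp(3·a(−z)). Let z(Q) ∈ ℚ⟦Q⟧ be the compositional inverse of Q(z), i.e. the unique formal power series with zero constant term satisfying Q(z(Q)) = Q. Then M(Q) := exp(a(−z(Q))) satisfies M(Q) ≡ 1 − 2Q + 5Q² − 32Q³ (mod Q⁴). -/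
open PowerSeries Finset

noncomputable section

/-- The series `a(z) = ∑_{k ≥ 1} ((3k−1)!/(k!)³) z^k ∈ ℚ⟦z⟧`. -/
def aP2 : PowerSeries ℚ :=
  PowerSeries.mk fun k => if k = 0 then 0 else ((3 * k - 1).factorial : ℚ) / ((k.factorial : ℚ)) ^ 3

/-- The closed mirror map of `ℙ²`, `Q(z) = z·exp(3·a(−z))`. -/
def closedMirrorMapP2 : PowerSeries ℚ :=
  PowerSeries.X * PowerSeries.expAt (3 * PowerSeries.rescale (-1 : ℚ) aP2)

lemma coeff_substInto (f g : PowerSeries ℚ) (n : ℕ) :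
    coeff n (f.substInto g) = ∑ k ∈ range (n + 1), (coeff k g) * (coeff n (f ^ k)) :=
  PowerSeries.coeff_mk _ _

section PowCoeffs
variable (f : PowerSeries ℚ) (h : coeff 0 f = 0)

include h

lemma pw0 (k : ℕ) : coeff 0 (f ^ (k + 1)) = 0 := by
  rw [coeff_zero_eq_constantCoeff] at *
  rw [map_pow, h, zero_pow (Nat.succ_ne_zero k)]

lemma pw2_1 : coeff 1 (f ^ 2) = 0 := by
  rw [pow_two, PowerSeries.coeff_mul, Finset.Nat.sum_antidiagonal_eq_sum_range_succ_mk]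
  simp [Finset.sum_range_succ, h]

lemma pw2_2 : coeff 2 (f ^ 2) = (coeff 1 f) ^ 2 := by
  rw [pow_two, PowerSeries.coeff_mul, Finset.Nat.sum_antidiagonal_eq_sum_range_succ_mk]
  simp [Finset.sum_range_succ, h]
  ring

lemma pw2_3 : coeff 3 (f ^ 2) = 2 * coeff 1 f * coeff 2 f := by
  rw [pow_two, PowerSeries.coeff_mul, Finset.Nat.sum_antidiagonal_eq_sum_range_succ_mk]
  simp [Finset.sum_range_succ, h]
  ring

lemma pw3_1 : coeff 1 (f ^ 3) = 0 := by
  rw [show (3:ℕ) = 2 + 1 from rfl, pow_succ, PowerSeries.coeff_mul,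
    Finset.Nat.sum_antidiagonal_eq_sum_range_succ_mk]
  simp [Finset.sum_range_succ, h, pw0 f h]

lemma pw3_2 : coeff 2 (f ^ 3) = 0 := by
  rw [show (3:ℕ) = 2 + 1 from rfl, pow_succ, PowerSeries.coeff_mul,
    Finset.Nat.sum_antidiagonal_eq_sum_range_succ_mk]
  simp [Finset.sum_range_succ, h, pw0 f h, pw2_1 f h]

lemma pw3_3 : coeff 3 (f ^ 3) = (coeff 1 f) ^ 3 := by
  rw [show (3:ℕ) = 2 + 1 from rfl, pow_succ, PowerSeries.coeff_mul,
    Finset.Nat.sum_antidiagonal_eq_sum_range_succ_mk]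
  simp [Finset.sum_range_succ, h, pw0 f h, pw2_1 f h, pw2_2 f h]
  ring

end PowCoeffs

lemma coeff_three_mul (g : PowerSeries ℚ) (n : ℕ) :
    coeff n ((3 : PowerSeries ℚ) * g) = 3 * coeff n g := by
  rw [show (3 : PowerSeries ℚ) = C 3 from (map_ofNat C 3).symm, coeff_C_mul]

lemma ca0 : coeff 0 aP2 = 0 := by
  rw [aP2, PowerSeries.coeff_mk]; simp

lemma ca1 : coeff 1 aP2 = 2 := by
  rw [aP2, PowerSeries.coeff_mk]; norm_num [Nat.factorial]

lemma ca2 : coeff 2 aP2 = 15 := by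
  rw [aP2, PowerSeries.coeff_mk]; norm_num [Nat.factorial]

lemma ca3 : coeff 3 aP2 = 560 / 3 := by
  rw [aP2, PowerSeries.coeff_mk]; norm_num [Nat.factorial]

lemma caR (n : ℕ) : coeff n (3 * PowerSeries.rescale (-1 : ℚ) aP2)
    = 3 * ((-1 : ℚ) ^ n * coeff n aP2) := by
  rw [coeff_three_mul, PowerSeries.coeff_rescale]

lemma cF0 : coeff 0 (3 * PowerSeries.rescale (-1 : ℚ) aP2) = 0 := by
  rw [caR]; simp [aP2, PowerSeries.coeff_mk]

lemma cF1 : coeff 1 (3 * PowerSeries.rescale (-1 : ℚ) aP2) = -6 := by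
  rw [caR, ca1]; norm_num

lemma cF2 : coeff 2 (3 * PowerSeries.rescale (-1 : ℚ) aP2) = 45 := by
  rw [caR, ca2]; norm_num

lemma cE (n : ℕ) : coeff n (PowerSeries.expAt (3 * PowerSeries.rescale (-1 : ℚ) aP2))
    = ∑ k ∈ range (n + 1), (algebraMap ℚ ℚ) (1 / k.factorial)
        * (coeff n ((3 * PowerSeries.rescale (-1 : ℚ) aP2) ^ k)) := by
  rw [PowerSeries.expAt, coeff_substInto]
  simp [PowerSeries.coeff_exp]

lemma cE0 : coeff 0 (PowerSeries.expAt (3 * PowerSeries.rescale (-1 : ℚ) aP2)) = 1 := by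
  rw [cE]; simp

lemma cE1 : coeff 1 (PowerSeries.expAt (3 * PowerSeries.rescale (-1 : ℚ) aP2)) = -6 := by
  rw [cE]
  simp [Finset.sum_range_succ, cF1]

lemma cE2 : coeff 2 (PowerSeries.expAt (3 * PowerSeries.rescale (-1 : ℚ) aP2)) = 63 := by
  rw [cE]
  simp [Finset.sum_range_succ, cF2, pw2_2 _ cF0, cF1, Nat.factorial]
  norm_num

lemma cQ0 : coeff 0 closedMirrorMapP2 = 0 := by
  rw [closedMirrorMapP2, coeff_zero_eq_constantCoeff]; simp

lemma cQ1 : coeff 1 closedMirrorMapP2 = 1 := by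
  rw [closedMirrorMapP2, show (1:ℕ) = 0 + 1 from rfl, PowerSeries.coeff_succ_X_mul, cE0]

lemma cQ2 : coeff 2 closedMirrorMapP2 = -6 := by
  rw [closedMirrorMapP2, show (2:ℕ) = 1 + 1 from rfl, PowerSeries.coeff_succ_X_mul, cE1]

lemma cQ3 : coeff 3 closedMirrorMapP2 = 63 := by
  rw [closedMirrorMapP2, show (3:ℕ) = 2 + 1 from rfl, PowerSeries.coeff_succ_X_mul, cE2]

/-- **Example 1.1, open mirror map in the symplectic parameter**: if `z(Q)` is the
compositional inverse of the closed mirror map `Q(z) = z·exp(3·a(−z))` — the unique power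
series with zero constant term satisfying `Q(z(Q)) = Q` — then
`M(Q) = exp(a(−z(Q)))` satisfies `M(Q) ≡ 1 − 2Q + 5Q² − 32Q³ (mod Q⁴)`. -/
theorem openMirrorMap_P2_in_Q_expansion
    (zQ : PowerSeries ℚ) (h0 : PowerSeries.constantCoeff zQ = 0)
    (hinv : PowerSeries.substInto zQ closedMirrorMapP2 = PowerSeries.X) :
    (PowerSeries.coeff 0)
        (PowerSeries.expAt (PowerSeries.substInto zQ (PowerSeries.rescale (-1 : ℚ) aP2))) = 1 ∧
      (PowerSeries.coeff 1)
        (PowerSeries.expAt (PowerSeries.substInto zQ (PowerSeries.rescale (-1 : ℚ) aP2))) = -2 ∧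
      (PowerSeries.coeff 2)
        (PowerSeries.expAt (PowerSeries.substInto zQ (PowerSeries.rescale (-1 : ℚ) aP2))) = 5 ∧
      (PowerSeries.coeff 3)
        (PowerSeries.expAt (PowerSeries.substInto zQ (PowerSeries.rescale (-1 : ℚ) aP2))) = -32 := by
  have h0' : coeff 0 zQ = 0 := by rw [coeff_zero_eq_constantCoeff]; exact h0
  -- coefficients of zQ
  have e1 := congrArg (coeff 1) hinv
  rw [coeff_substInto] at e1
  simp [Finset.sum_range_succ, cQ0, cQ1] at e1
  have e2 := congrArg (coeff 2) hinv
  rw [coeff_substInto] at e2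
  simp [Finset.sum_range_succ, cQ0, cQ1, cQ2, pw2_2 _ h0', e1, PowerSeries.coeff_X] at e2
  have hz2 : coeff 2 zQ = 6 := by linarith
  have e3 := congrArg (coeff 3) hinv
  rw [coeff_substInto] at e3
  simp [Finset.sum_range_succ, cQ0, cQ1, cQ2, cQ3, pw2_3 _ h0', pw3_3 _ h0',
    e1, hz2, PowerSeries.coeff_X] at e3
  have hz3 : coeff 3 zQ = 9 := by linarith
  -- coefficients of rescale (-1) aP2
  have hr0 : coeff 0 (PowerSeries.rescale (-1 : ℚ) aP2) = 0 := by
    rw [PowerSeries.coeff_rescale]; simp [aP2, PowerSeries.coeff_mk]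
  have hr1 : coeff 1 (PowerSeries.rescale (-1 : ℚ) aP2) = -2 := by
    rw [PowerSeries.coeff_rescale, ca1]; norm_num
  have hr2 : coeff 2 (PowerSeries.rescale (-1 : ℚ) aP2) = 15 := by
    rw [PowerSeries.coeff_rescale, ca2]; norm_num
  have hr3 : coeff 3 (PowerSeries.rescale (-1 : ℚ) aP2) = -(560 / 3) := by
    rw [PowerSeries.coeff_rescale, ca3]; norm_num
  -- coefficients of A := substInto zQ (rescale (-1) aP2)
  set A := PowerSeries.substInto zQ (PowerSeries.rescale (-1 : ℚ) aP2) with hA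
  have hA0 : coeff 0 A = 0 := by
    rw [hA, coeff_substInto]; simp [ca0]
  have hA1 : coeff 1 A = -2 := by
    rw [hA, coeff_substInto]
    simp [Finset.sum_range_succ, ca0, ca1, e1]
  have hA2 : coeff 2 A = 3 := by
    rw [hA, coeff_substInto]
    simp [Finset.sum_range_succ, ca0, ca1, ca2, pw2_2 _ h0', e1, hz2]
    norm_num
  have hA3 : coeff 3 A = -(74 / 3) := by
    rw [hA, coeff_substInto]
    simp [Finset.sum_range_succ, ca0, ca1, ca2, ca3, pw2_3 _ h0', pw3_3 _ h0', e1, hz2, hz3]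
    norm_num
  -- final exponential
  have hM : ∀ n, coeff n (PowerSeries.expAt A)
      = ∑ k ∈ range (n + 1), (1 / (k.factorial : ℚ)) * coeff n (A ^ k) := by
    intro n
    rw [PowerSeries.expAt, coeff_substInto]
    simp [PowerSeries.coeff_exp]
  refine ⟨?_, ?_, ?_, ?_⟩
  · rw [hM]; simp
  · rw [hM]; simp [Finset.sum_range_succ, hA1]
  · rw [hM]
    simp [Finset.sum_range_succ, hA2, pw2_2 _ hA0, hA1, Nat.factorial]
    norm_num
  · rw [hM]
    simp [Finset.sum_range_succ, hA3, pw2_3 _ hA0, pw3_3 _ hA0, hA1, hA2, Nat.factorial]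
    norm_num
end
end

section
/- In the Laurent polynomial ring in two variables x, y over ℚ[z₁, z₂], consider W₃ = x + y + z₁·x^{−1} + z₁z₂·y·x^{−1}·(1 + z₁·x^{−1}y^{−1})² (the corrected potential ϑ₁(𝔽₃) in the CPS chamber, i.e. W₃ = x + y + z₁/x + z₁z₂y/x + 2z₁²z₂/x² + z₁³z₂/(x³y)) and W₁' = x + y + z₁·x^{−1} + z₁²z₂·x^{−1}y^{−1} (the Hori–Vafa potential of 𝔽₁ with z₂ replaced by z₁z₂). Then for every integer k ≥ 1 the constant terms agree: const(W₃^k) = const(W₁'^k). In particular the classical periods of the potentials of 𝔽₃ and 𝔽₁ coincide under the substitution z₂ ↦ z₁z₂. -/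
noncomputable section

/-- The ring of Laurent polynomials in two variables `x, y` over `ℚ[z₁, z₂]`,
as the group algebra `ℚ[z₁,z₂][ℤ²]`. -/
abbrev LaurentZZ : Type := AddMonoidAlgebra (MvPolynomial (Fin 2) ℚ) (ℤ × ℤ)

/-- The parameter `z₁`. -/
def z₁ : MvPolynomial (Fin 2) ℚ := MvPolynomial.X 0

/-- The parameter `z₂`. -/
def z₂ : MvPolynomial (Fin 2) ℚ := MvPolynomial.X 1

/-- The corrected potential `ϑ₁(𝔽₃)` in the CPS chamber:
`W₃ = x + y + z₁/x + z₁z₂·y/x + 2z₁²z₂/x² + z₁³z₂/(x³y)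
    = x + y + z₁/x + z₁z₂·(y/x)·(1 + z₁/(xy))²`. -/
def W₃ : LaurentZZ :=
  AddMonoidAlgebra.single ((1, 0) : ℤ × ℤ) 1 +
    AddMonoidAlgebra.single ((0, 1) : ℤ × ℤ) 1 +
      AddMonoidAlgebra.single ((-1, 0) : ℤ × ℤ) z₁ +
        AddMonoidAlgebra.single ((-1, 1) : ℤ × ℤ) (z₁ * z₂) +
          AddMonoidAlgebra.single ((-2, 0) : ℤ × ℤ) (2 * z₁ ^ 2 * z₂) +
            AddMonoidAlgebra.single ((-3, -1) : ℤ × ℤ) (z₁ ^ 3 * z₂)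

/-- The Hori–Vafa potential of `𝔽₁` with `z₂` replaced by `z₁z₂`:
`W₁' = x + y + z₁/x + z₁²z₂/(xy)`. -/
def W₁' : LaurentZZ :=
  AddMonoidAlgebra.single ((1, 0) : ℤ × ℤ) 1 +
    AddMonoidAlgebra.single ((0, 1) : ℤ × ℤ) 1 +
      AddMonoidAlgebra.single ((-1, 0) : ℤ × ℤ) z₁ +
        AddMonoidAlgebra.single ((-1, -1) : ℤ × ℤ) (z₁ ^ 2 * z₂)

/-! ### Auxiliary setup -/

abbrev R := MvPolynomial (Fin 2) ℚ
def sg (v : ℤ × ℤ) (c : R) : LaurentZZ := AddMonoidAlgebra.single v c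
lemma sg_mul (v w : ℤ × ℤ) (c d : R) : sg v c * sg w d = sg (v + w) (c * d) :=
  AddMonoidAlgebra.single_mul_single _ _ _ _
def Xm : LaurentZZ := sg (1,0) 1
def Ym : LaurentZZ := sg (0,1) 1
def A : LaurentZZ := Xm + Ym
def cX : LaurentZZ := sg (-1,0) z₁
def u : LaurentZZ := A + cX
def w : LaurentZZ := Ym + cX

lemma A_pow (P : ℕ) : A ^ P = ∑ t ∈ Finset.range (P+1), sg ((t : ℤ), ((P - t : ℕ) : ℤ)) (P.choose t : R) := by
  rw [A, add_pow]
  refine Finset.sum_congr rfl fun t ht => ?_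
  rw [Xm, Ym, sg, sg, AddMonoidAlgebra.single_pow, AddMonoidAlgebra.single_pow]
  rw [AddMonoidAlgebra.single_mul_single]
  rw [show ((P.choose t : LaurentZZ)) = AddMonoidAlgebra.single (0 : ℤ×ℤ) ((P.choose t : R)) by
    rw [AddMonoidAlgebra.natCast_def]  ]
  rw [AddMonoidAlgebra.single_mul_single]
  congr 1 <;> simp [Prod.smul_def]

lemma coeffA (P : ℕ) (a b : ℤ) :
    (A ^ P).coeff (a, b) = if 0 ≤ a ∧ 0 ≤ b ∧ a + b = P then (P.choose a.toNat : R) else 0 := by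
  rw [A_pow, AddMonoidAlgebra.coeff_sum, Finsupp.finset_sum_apply]
  have hs : ∀ t ∈ Finset.range (P+1),
      (sg ((t:ℤ), ((P - t : ℕ) : ℤ)) (P.choose t : R)).coeff (a, b)
      = if ((t:ℤ), ((P-t : ℕ):ℤ)) = (a,b) then (P.choose t : R) else 0 := by
    intro t _; rw [sg, AddMonoidAlgebra.coeff_single]; exact Finsupp.single_apply
  rw [Finset.sum_congr rfl hs]
  by_cases h : 0 ≤ a ∧ 0 ≤ b ∧ a + b = P
  · obtain ⟨h1, h2, h3⟩ := h
    rw [if_pos ⟨h1, h2, h3⟩, Finset.sum_eq_single a.toNat]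
    · have hc : ((a.toNat:ℤ), ((P - a.toNat : ℕ):ℤ)) = (a, b) := by
        rw [Prod.mk.injEq]; omega
      rw [if_pos hc]
    · intro t _ ht
      rw [if_neg]; intro hc; apply ht
      rw [Prod.mk.injEq] at hc
      omega
    · intro hmem
      exfalso; apply hmem; simp; omega
  · rw [if_neg h]
    refine Finset.sum_eq_zero fun t ht => ?_
    rw [if_neg]
    intro hc
    rw [Prod.mk.injEq] at hc
    simp only [Finset.mem_range] at ht
    omega

lemma cX_pow (n : ℕ) : cX ^ n = sg (-(n:ℤ), 0) (z₁ ^ n) := by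
  rw [cX, sg, AddMonoidAlgebra.single_pow]
  congr 1
  simp [Prod.smul_def]

lemma u_pow (p : ℕ) : u ^ p = ∑ r ∈ Finset.range (p+1),
    A ^ r * sg (-((p-r : ℕ):ℤ), 0) ((p.choose r : R) * z₁^(p-r)) := by
  rw [u, add_pow]
  refine Finset.sum_congr rfl fun r hr => ?_
  rw [cX_pow, AddMonoidAlgebra.natCast_def, mul_assoc, sg]
  rw [AddMonoidAlgebra.single_mul_single, add_zero, mul_comm (z₁ ^ (p-r)), sg]

lemma w_pow (M : ℕ) : w ^ M = ∑ i ∈ Finset.range (M+1),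
    sg (-((M-i : ℕ):ℤ), (i:ℤ)) ((M.choose i : R) * z₁^(M-i)) := by
  rw [w, add_pow]
  refine Finset.sum_congr rfl fun i hi => ?_
  rw [cX_pow, Ym, AddMonoidAlgebra.natCast_def, sg, AddMonoidAlgebra.single_pow, sg,
    AddMonoidAlgebra.single_mul_single, AddMonoidAlgebra.single_mul_single, sg]
  congr 1
  · rw [Prod.smul_def]; simp [Prod.ext_iff]
  · rw [one_pow, one_mul, mul_comm]

lemma uw_apply (p M : ℕ) (a b : ℤ) :
    (u ^ p * w ^ M).coeff (a, b) = ∑ r ∈ Finset.range (p+1), ∑ i ∈ Finset.range (M+1),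
      (A ^ r).coeff (a + ((p-r : ℕ):ℤ) + ((M-i : ℕ):ℤ), b - (i:ℤ))
        * (z₁^(p-r) * z₁^(M-i) * ((p.choose r : R) * (M.choose i : R))) := by
  rw [u_pow, w_pow, Finset.sum_mul_sum]
  rw [AddMonoidAlgebra.coeff_sum, Finsupp.finset_sum_apply]
  refine Finset.sum_congr rfl fun r hr => ?_
  rw [AddMonoidAlgebra.coeff_sum, Finsupp.finset_sum_apply]
  refine Finset.sum_congr rfl fun i hi => ?_
  rw [mul_assoc, sg, sg, AddMonoidAlgebra.single_mul_single, ← sg]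
  rw [sg, AddMonoidAlgebra.coeff_mul_single_apply]
  congr 1
  · congr 1
    rw [Prod.ext_iff]
    constructor
    · simp; ring
    · simp [sub_eq_add_neg]
  · ring

lemma u_apply (p : ℕ) (a b : ℤ) :
    (u ^ p).coeff (a, b) = ∑ r ∈ Finset.range (p+1),
      (A ^ r).coeff (a + ((p-r : ℕ):ℤ), b) * (z₁^(p-r) * (p.choose r : R)) := by
  have h := uw_apply p 0 a b
  rw [pow_zero, mul_one] at h
  rw [h]
  refine Finset.sum_congr rfl fun r hr => ?_
  rw [Finset.sum_range_one]
  norm_num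

lemma u_qq (m q : ℕ) : (u ^ (2*m)).coeff ((q:ℤ), (q:ℤ)) =
    (((2*m).choose (m+q) * (m+q).choose m : ℕ) : R) * z₁ ^ (m - q) := by
  rw [u_apply]
  rw [Finset.sum_eq_single (m+q)]
  · by_cases hq : q ≤ m
    · have hcond : 0 ≤ (q:ℤ) + ((2*m - (m+q) : ℕ):ℤ) ∧ 0 ≤ (q:ℤ) ∧
          (q:ℤ) + ((2*m - (m+q) : ℕ):ℤ) + (q:ℤ) = ((m+q : ℕ):ℤ) := by
        refine ⟨by omega, by omega, by omega⟩
      rw [coeffA, if_pos hcond]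
      have ht : ((q:ℤ) + ((2*m - (m+q) : ℕ):ℤ)).toNat = m := by omega
      rw [ht, show 2*m - (m+q) = m - q from by omega]
      push_cast
      ring
    · rw [coeffA, if_neg (by push_cast; omega)]
      rw [Nat.choose_eq_zero_of_lt (show 2*m < m + q by omega)]
      push_cast
      ring
  · intro r hr hne
    simp only [Finset.mem_range] at hr
    rw [coeffA, if_neg (by push_cast; omega), zero_mul]
  · intro hmem
    simp only [Finset.mem_range] at hmem
    rw [Nat.choose_eq_zero_of_lt (show 2*m < m + q by omega)]
    push_cast
    ring

lemma u_qq_odd (p q : ℕ) (hodd : Odd p) : (u ^ p).coeff ((q:ℤ), (q:ℤ)) = 0 := by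
  obtain ⟨t, ht⟩ := hodd
  rw [u_apply]
  refine Finset.sum_eq_zero fun r hr => ?_
  simp only [Finset.mem_range] at hr
  rw [coeffA, if_neg (by push_cast; omega), zero_mul]

lemma uw_qq_odd (p q : ℕ) (hodd : Odd p) : (u ^ p * w ^ (2*q)).coeff ((q:ℤ), (q:ℤ)) = 0 := by
  obtain ⟨t, ht⟩ := hodd
  rw [uw_apply]
  refine Finset.sum_eq_zero fun r hr => Finset.sum_eq_zero fun i hi => ?_
  simp only [Finset.mem_range] at hr hi
  rw [coeffA, if_neg (by push_cast; omega), zero_mul]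

lemma uw_qq (m q : ℕ) : (u ^ (2*m) * w ^ (2*q)).coeff ((q:ℤ), (q:ℤ)) =
    ((∑ i ∈ Finset.range (2*q+1),
      (2*q).choose i * ((2*m).choose (m+2*q-i) * (m+2*q-i).choose (m+q)) : ℕ) : R) * z₁ ^ m := by
  rw [uw_apply, Finset.sum_comm]
  push_cast [Finset.sum_mul]
  refine Finset.sum_congr rfl fun i hi => ?_
  simp only [Finset.mem_range] at hi
  rw [Finset.sum_eq_single (m + 2*q - i)]
  · rw [show z₁ ^ (2*m - (m + 2*q - i)) * z₁ ^ (2*q - i)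
        = z₁ ^ ((2*m - (m + 2*q - i)) + (2*q - i)) from (pow_add _ _ _).symm]
    by_cases h1 : 2*q - m ≤ i
    · by_cases h2 : i ≤ q
      · have hcond : 0 ≤ (q:ℤ) + ((2*m - (m + 2*q - i) : ℕ):ℤ) + ((2*q - i : ℕ):ℤ) ∧
            0 ≤ (q:ℤ) - (i:ℤ) ∧
            (q:ℤ) + ((2*m - (m + 2*q - i) : ℕ):ℤ) + ((2*q - i : ℕ):ℤ) + ((q:ℤ) - (i:ℤ))
              = ((m + 2*q - i : ℕ):ℤ) := ⟨by omega, by omega, by omega⟩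
        rw [coeffA, if_pos hcond]
        have ht : ((q:ℤ) + ((2*m - (m + 2*q - i) : ℕ):ℤ) + ((2*q - i : ℕ):ℤ)).toNat = m + q := by
          omega
        rw [ht, show (2*m - (m + 2*q - i)) + (2*q - i) = m from by omega]
        push_cast
        ring
      · rw [coeffA, if_neg (by push_cast; omega)]
        rw [Nat.choose_eq_zero_of_lt (show m + 2*q - i < m + q by omega)]
        push_cast
        ring
    · rw [Nat.choose_eq_zero_of_lt (show 2*m < m + 2*q - i by omega)]
      push_cast
      ring
  · intro r hr hne
    simp only [Finset.mem_range] at hr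
    rw [coeffA, if_neg (by push_cast; omega), zero_mul]
  · intro hmem
    simp only [Finset.mem_range] at hmem
    rw [Nat.choose_eq_zero_of_lt (show 2*m < m + 2*q - i by omega)]
    push_cast
    ring

lemma natid (m q : ℕ) :
    ∑ i ∈ Finset.range (2*q+1),
       (2*q).choose i * ((2*m).choose (m+2*q-i) * (m+2*q-i).choose (m+q))
      = (2*m).choose (m+q) * (m+q).choose m := by
  by_cases hq : q ≤ m
  · have hsub : ∑ i ∈ Finset.range (q+1),
        (2*q).choose i * ((2*m).choose (m+2*q-i) * (m+2*q-i).choose (m+q))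
        = ∑ i ∈ Finset.range (2*q+1),
        (2*q).choose i * ((2*m).choose (m+2*q-i) * (m+2*q-i).choose (m+q)) := by
      refine Finset.sum_subset (Finset.range_subset_range.2 (by omega)) ?_
      intro i hi hni
      simp only [Finset.mem_range] at hi hni
      rw [Nat.choose_eq_zero_of_lt (show m + 2*q - i < m + q by omega)]
      simp
    rw [← hsub]
    have hterm : ∀ i ∈ Finset.range (q+1),
        (2*q).choose i * ((2*m).choose (m+2*q-i) * (m+2*q-i).choose (m+q))
        = (2*m).choose (m+q) * ((2*q).choose i * (m-q).choose (q-i)) := by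
      intro i hi
      simp only [Finset.mem_range] at hi
      by_cases h1 : 2*q - m ≤ i
      · have hc := Nat.choose_mul (n := 2*m) (show m+q ≤ m+2*q-i by omega)
        rw [hc, show 2*m - (m+q) = m - q from by omega,
          show m+2*q-i - (m+q) = q - i from by omega]
        ring
      · rw [Nat.choose_eq_zero_of_lt (show 2*m < m + 2*q - i by omega),
          Nat.choose_eq_zero_of_lt (show m - q < q - i by omega)]
        ring
    rw [Finset.sum_congr rfl hterm, ← Finset.mul_sum]
    congr 1
    have hv := Nat.add_choose_eq (2*q) (m-q) q
    rw [Finset.Nat.sum_antidiagonal_eq_sum_range_succ_mk] at hv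
    rw [← hv, show 2*q + (m-q) = m + q from by omega]
    rw [show (m+q).choose m = (m+q).choose (m+q-m) from by rw [Nat.choose_symm (by omega)]]
    congr 1
    omega
  · rw [Nat.choose_eq_zero_of_lt (show 2*m < m+q by omega), zero_mul]
    refine Finset.sum_eq_zero fun i hi => ?_
    simp only [Finset.mem_range] at hi
    by_cases h2 : i ≤ q
    · rw [Nat.choose_eq_zero_of_lt (show 2*m < m + 2*q - i by omega)]
      ring
    · rw [Nat.choose_eq_zero_of_lt (show m + 2*q - i < m + q by omega)]
      ring

lemma key (p q : ℕ) :
    z₁^q * (u^p * w^(2*q)).coeff ((q:ℤ),(q:ℤ)) = z₁^(2*q) * (u^p).coeff ((q:ℤ),(q:ℤ)) := by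
  rcases Nat.even_or_odd p with he | ho
  · obtain ⟨m, hm⟩ := he
    rw [show p = 2*m from by omega, uw_qq, u_qq, natid]
    by_cases hq : q ≤ m
    · obtain ⟨d, hd⟩ : ∃ d, m = q + d := ⟨m - q, by omega⟩
      subst hd
      rw [show q + d - q = d from by omega]
      ring
    · rw [Nat.choose_eq_zero_of_lt (show 2*m < m+q by omega)]
      push_cast
      ring
  · rw [uw_qq_odd p q ho, u_qq_odd p q ho, mul_zero, mul_zero]

lemma hW1 : W₁' * sg (1,1) 1 = u * sg (1,1) 1 + sg (0,0) (z₁^2*z₂) := by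
  simp only [W₁', u, w, A, Xm, Ym, cX, sg, add_mul, mul_add,
    AddMonoidAlgebra.single_mul_single, Prod.mk_add_mk, mul_one, one_mul]
  norm_num

lemma hW3 : W₃ * sg (1,1) 1 = u * sg (1,1) 1 + sg (0,0) (z₁*z₂) * w^2 := by
  rw [sq]
  simp only [W₃, u, w, A, Xm, Ym, cX, sg, add_mul, mul_add,
    AddMonoidAlgebra.single_mul_single, Prod.mk_add_mk, mul_one, one_mul,
    Int.reduceAdd, Int.reduceNeg]
  rw [show z₁ * z₂ * (z₁ * z₁) = z₁ ^ 3 * z₂ from by ring,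
    show (2 : R) * z₁ ^ 2 * z₂ = z₁ * z₂ * z₁ + z₁ * z₂ * z₁ from by ring,
    AddMonoidAlgebra.single_add]
  abel

lemma shift_pow (f : LaurentZZ) (k : ℕ) :
    (f ^ k).coeff ((0,0) : ℤ × ℤ) = ((f * sg (1,1) 1) ^ k).coeff ((k:ℤ), (k:ℤ)) := by
  rw [mul_pow, sg, AddMonoidAlgebra.single_pow, one_pow,
    show (k • ((1,1) : ℤ×ℤ)) = ((k:ℤ), (k:ℤ)) from by simp [Prod.smul_def],
    AddMonoidAlgebra.coeff_mul_single_apply, add_neg_cancel, mul_one]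
  rfl

lemma term3 (i q k : ℕ) :
    ((u * sg (1,1) 1) ^ i * (sg (0,0) (z₁*z₂) * w^2) ^ q * ((k.choose i : ℕ) : LaurentZZ)).coeff
        (((i+q : ℕ):ℤ), ((i+q : ℕ):ℤ))
      = (u^i * w^(2*q)).coeff ((q:ℤ), (q:ℤ)) * ((z₁*z₂)^q * ((k.choose i : ℕ) : R)) := by
  rw [mul_pow, mul_pow, ← pow_mul, sg, sg, AddMonoidAlgebra.single_pow,
    AddMonoidAlgebra.single_pow, one_pow, AddMonoidAlgebra.natCast_def,
    show (i • ((1,1) : ℤ×ℤ)) = ((i:ℤ), (i:ℤ)) from by simp [Prod.smul_def],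
    show (q • ((0,0) : ℤ×ℤ)) = ((0:ℤ), (0:ℤ)) from by simp [Prod.smul_def]]
  rw [show u ^ i * AddMonoidAlgebra.single ((i:ℤ), (i:ℤ)) (1:R)
        * (AddMonoidAlgebra.single ((0:ℤ), (0:ℤ)) ((z₁*z₂)^q) * w ^ (2*q))
        * AddMonoidAlgebra.single (0 : ℤ×ℤ) ((k.choose i : ℕ) : R)
      = (u ^ i * w ^ (2*q)) * (AddMonoidAlgebra.single ((i:ℤ), (i:ℤ)) (1:R)
        * (AddMonoidAlgebra.single ((0:ℤ), (0:ℤ)) ((z₁*z₂)^q)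
          * AddMonoidAlgebra.single (0 : ℤ×ℤ) ((k.choose i : ℕ) : R))) from by ring]
  rw [AddMonoidAlgebra.single_mul_single, AddMonoidAlgebra.single_mul_single]
  rw [AddMonoidAlgebra.coeff_mul_single_apply]
  congr 1
  · congr 1
    rw [Prod.ext_iff]
    simp
  · rw [one_mul]

lemma term1 (i q k : ℕ) :
    ((u * sg (1,1) 1) ^ i * (sg (0,0) (z₁^2*z₂)) ^ q * ((k.choose i : ℕ) : LaurentZZ)).coeff
        (((i+q : ℕ):ℤ), ((i+q : ℕ):ℤ))
      = (u^i).coeff ((q:ℤ), (q:ℤ)) * ((z₁^2*z₂)^q * ((k.choose i : ℕ) : R)) := by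
  rw [mul_pow, sg, sg, AddMonoidAlgebra.single_pow,
    AddMonoidAlgebra.single_pow, one_pow, AddMonoidAlgebra.natCast_def,
    show (i • ((1,1) : ℤ×ℤ)) = ((i:ℤ), (i:ℤ)) from by simp [Prod.smul_def],
    show (q • ((0,0) : ℤ×ℤ)) = ((0:ℤ), (0:ℤ)) from by simp [Prod.smul_def]]
  rw [show u ^ i * AddMonoidAlgebra.single ((i:ℤ), (i:ℤ)) (1:R)
        * AddMonoidAlgebra.single ((0:ℤ), (0:ℤ)) ((z₁^2*z₂)^q)
        * AddMonoidAlgebra.single (0 : ℤ×ℤ) ((k.choose i : ℕ) : R)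
      = u ^ i * (AddMonoidAlgebra.single ((i:ℤ), (i:ℤ)) (1:R)
        * (AddMonoidAlgebra.single ((0:ℤ), (0:ℤ)) ((z₁^2*z₂)^q)
          * AddMonoidAlgebra.single (0 : ℤ×ℤ) ((k.choose i : ℕ) : R))) from by ring]
  rw [AddMonoidAlgebra.single_mul_single, AddMonoidAlgebra.single_mul_single]
  rw [AddMonoidAlgebra.coeff_mul_single_apply]
  congr 1
  · congr 1
    rw [Prod.ext_iff]
    simp
  · rw [one_mul]

/-- The classical periods of the corrected potential of `𝔽₃` and of the Hori–Vafa potential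
of `𝔽₁` (with `z₂ ↦ z₁z₂`) coincide: for every `k ≥ 1`, `const(W₃^k) = const(W₁'^k)`. -/
theorem constantTerm_pow_F3_eq_F1 :
    ∀ k : ℕ, 1 ≤ k → (W₃ ^ k).coeff ((0, 0) : ℤ × ℤ) = (W₁' ^ k).coeff ((0, 0) : ℤ × ℤ) := by
  intro k _
  rw [shift_pow W₃ k, shift_pow W₁' k, hW3, hW1, add_pow, add_pow,
    AddMonoidAlgebra.coeff_sum, Finsupp.finset_sum_apply, AddMonoidAlgebra.coeff_sum,
    Finsupp.finset_sum_apply]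
  refine Finset.sum_congr rfl fun i hi => ?_
  simp only [Finset.mem_range] at hi
  obtain ⟨q, hq⟩ : ∃ q, k = i + q := ⟨k - i, by omega⟩
  subst hq
  rw [show i + q - i = q from by omega]
  rw [term3 i q (i+q), term1 i q (i+q)]
  linear_combination (z₂^q * (((i+q).choose i : ℕ) : R)) * key i q
end
end

section
/- In the ring of Laurent polynomials in two variables x, y over ℚ, let f = 2x + xy + y + x^{−1} + x^{−1}y^{−1} + 2y^{−1} + xy^{−1} and g = y + xy + 5x + 2x² + x^{−1}y^{−1} + 4y^{−1} + 6xy^{−1} + 4x²y^{−1} + x³y^{−1}. Then for every integer k ≥ 1 the constant terms agree: const(f^k) = const(g^k); equivalently, f and g have the same classical period. (For example const(f²) = const(g²) = 10, const(f³) = const(g³) = 30, const(f⁴) = const(g⁴) = 270.) -/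
noncomputable section

/-- The ring of Laurent polynomials in two variables `x, y` over `ℚ`,
as the group algebra `ℚ[ℤ²]`; the monomial `x^{v₁} y^{v₂}` corresponds to `(v₁, v₂) ∈ ℤ²`. -/
abbrev LaurentQ : Type := AddMonoidAlgebra ℚ (ℤ × ℤ)

/-- The potential `ϑ₁` (with curve-class parameters set to `1`) of the Fano toric
degeneration of `dP₅ = Bl⁴ℙ²`:
`f = 2x + xy + y + x⁻¹ + x⁻¹y⁻¹ + 2y⁻¹ + xy⁻¹`. -/
def fdP5 : LaurentQ :=
  AddMonoidAlgebra.single ((1, 0) : ℤ × ℤ) 2 +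
    AddMonoidAlgebra.single ((1, 1) : ℤ × ℤ) 1 +
      AddMonoidAlgebra.single ((0, 1) : ℤ × ℤ) 1 +
        AddMonoidAlgebra.single ((-1, 0) : ℤ × ℤ) 1 +
          AddMonoidAlgebra.single ((-1, -1) : ℤ × ℤ) 1 +
            AddMonoidAlgebra.single ((0, -1) : ℤ × ℤ) 2 +
              AddMonoidAlgebra.single ((1, -1) : ℤ × ℤ) 1

/-- The potential `ϑ₁` (with curve-class parameters set to `1`) of the non-Fano toric
degeneration of `dP₅ = Bl⁴ℙ²`:
`g = y + xy + 5x + 2x² + x⁻¹y⁻¹ + 4y⁻¹ + 6xy⁻¹ + 4x²y⁻¹ + x³y⁻¹`. -/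
def gdP5 : LaurentQ :=
  AddMonoidAlgebra.single ((0, 1) : ℤ × ℤ) 1 +
    AddMonoidAlgebra.single ((1, 1) : ℤ × ℤ) 1 +
      AddMonoidAlgebra.single ((1, 0) : ℤ × ℤ) 5 +
        AddMonoidAlgebra.single ((2, 0) : ℤ × ℤ) 2 +
          AddMonoidAlgebra.single ((-1, -1) : ℤ × ℤ) 1 +
            AddMonoidAlgebra.single ((0, -1) : ℤ × ℤ) 4 +
              AddMonoidAlgebra.single ((1, -1) : ℤ × ℤ) 6 +
                AddMonoidAlgebra.single ((2, -1) : ℤ × ℤ) 4 +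
                  AddMonoidAlgebra.single ((3, -1) : ℤ × ℤ) 1

namespace dP5Period

open AddMonoidAlgebra

abbrev A : Type := AddMonoidAlgebra ℚ ℤ
abbrev B : Type := AddMonoidAlgebra A ℤ

instance instCoeFunAMA {R M : Type*} [Semiring R] : CoeFun (AddMonoidAlgebra R M) (fun _ => M → R) :=
  ⟨fun u => u.coeff⟩

lemma Aadd_apply (u v : A) (n : ℤ) : (u + v) n = u n + v n := rfl
lemma Asingle_apply (a : ℤ) (q : ℚ) (n : ℤ) :
    (AddMonoidAlgebra.single a q) n = if a = n then q else 0 :=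
    AddMonoidAlgebra.coeff_single_apply
lemma Badd_apply (u v : B) (n : ℤ) : (u + v) n = u n + v n := rfl
lemma Bsingle_apply (a : ℤ) (q : A) (n : ℤ) :
    (AddMonoidAlgebra.single a q) n = if a = n then q else 0 :=
    AddMonoidAlgebra.coeff_single_apply
lemma Bsingle_add (a : ℤ) (u v : A) :
    (AddMonoidAlgebra.single a (u + v) : B)
      = AddMonoidAlgebra.single a u + AddMonoidAlgebra.single a v := AddMonoidAlgebra.single_add a u v
lemma Bsingle_zero (a : ℤ) : (AddMonoidAlgebra.single a (0 : A) : B) = 0 := AddMonoidAlgebra.single_zero a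

lemma slice_mul (P R : B) (am a0 a1 a2 : A)
    (hP : P = AddMonoidAlgebra.single (-1) am + AddMonoidAlgebra.single 0 a0 +
        AddMonoidAlgebra.single 1 a1 + AddMonoidAlgebra.single 2 a2) (d : ℤ) :
    (R * P) d = R (d + 1) * am + R d * a0 + R (d - 1) * a1 + R (d - 2) * a2 := by
  subst hP
  rw [mul_add, mul_add, mul_add, AddMonoidAlgebra.coeff_add, Finsupp.add_apply,
    AddMonoidAlgebra.coeff_add, Finsupp.add_apply, AddMonoidAlgebra.coeff_add, Finsupp.add_apply,
    AddMonoidAlgebra.coeff_mul_single_apply, AddMonoidAlgebra.coeff_mul_single_apply,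
    AddMonoidAlgebra.coeff_mul_single_apply, AddMonoidAlgebra.coeff_mul_single_apply,
    neg_neg, neg_zero, add_zero, ← sub_eq_add_neg, ← sub_eq_add_neg]

theorem mutation_key (c am a0 a1 a2 bm b0 b1 b2 : A) (P Q : B)
    (hP : P = AddMonoidAlgebra.single (-1) am + AddMonoidAlgebra.single 0 a0 +
        AddMonoidAlgebra.single 1 a1 + AddMonoidAlgebra.single 2 a2)
    (hQ : Q = AddMonoidAlgebra.single (-1) bm + AddMonoidAlgebra.single 0 b0 +
        AddMonoidAlgebra.single 1 b1 + AddMonoidAlgebra.single 2 b2)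
    (hrm : c * bm = am) (hr0 : b0 = a0) (hr1 : b1 = c * a1) (hr2 : b2 = c * (c * a2))
    (hc : c ≠ 0) : ∀ k : ℕ, (Q ^ k) 0 = (P ^ k) 0 := by
  have key : ∀ k : ℕ, (∀ d : ℤ, (k : ℤ) + d < 0 → (P ^ k) d = 0) ∧
      (∀ d : ℤ, c ^ k * (Q ^ k) d = c ^ ((k : ℤ) + d).toNat * (P ^ k) d) := by
    intro k
    induction k with
    | zero =>
        constructor
        · intro d hd
          rw [pow_zero, AddMonoidAlgebra.one_def, AddMonoidAlgebra.coeff_single_apply, if_neg (by omega)]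
        · intro d
          rw [pow_zero c, one_mul, pow_zero Q, pow_zero P]
          rw [AddMonoidAlgebra.one_def, AddMonoidAlgebra.coeff_single_apply]
          by_cases hd : d = 0
          · subst hd
            rw [if_pos rfl]
            norm_num
          · rw [if_neg (by omega), mul_zero]
    | succ k ih =>
        obtain ⟨ihv, ihe⟩ := ih
        have hv : ∀ d : ℤ, ((k : ℕ) + 1 : ℤ) + d < 0 → (P ^ (k + 1)) d = 0 := by
          intro d hd
          rw [pow_succ, slice_mul P (P ^ k) am a0 a1 a2 hP d,
            ihv (d + 1) (by omega), ihv d (by omega),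
            ihv (d - 1) (by omega), ihv (d - 2) (by omega)]
          ring
        refine ⟨by exact_mod_cast hv, ?_⟩
        intro d
        have t1 : c ^ (k + 1) * ((Q ^ k) (d + 1) * bm)
            = c ^ (((k : ℤ) + 1 + d).toNat) * ((P ^ k) (d + 1) * am) := by
          have e : ((k : ℤ) + (d + 1)).toNat = ((k : ℤ) + 1 + d).toNat := by omega
          calc c ^ (k + 1) * ((Q ^ k) (d + 1) * bm)
              = (c ^ k * (Q ^ k) (d + 1)) * (c * bm) := by ring
            _ = (c ^ (((k : ℤ) + (d + 1)).toNat) * (P ^ k) (d + 1)) * am := by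
                rw [ihe (d + 1), hrm]
            _ = _ := by rw [e]; ring
        have t2 : c ^ (k + 1) * ((Q ^ k) d * b0)
            = c ^ (((k : ℤ) + 1 + d).toNat) * ((P ^ k) d * a0) := by
          by_cases hcase : 0 ≤ (k : ℤ) + d
          · have e : ((k : ℤ) + 1 + d).toNat = ((k : ℤ) + d).toNat + 1 := by omega
            calc c ^ (k + 1) * ((Q ^ k) d * b0)
                = (c ^ k * (Q ^ k) d) * (c * b0) := by ring
              _ = (c ^ (((k : ℤ) + d).toNat) * (P ^ k) d) * (c * a0) := by rw [ihe d, hr0]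
              _ = _ := by rw [e]; ring
          · have hz : (P ^ k) d = 0 := ihv d (by omega)
            have hq : c ^ k * (Q ^ k) d = 0 := by rw [ihe d, hz, mul_zero]
            calc c ^ (k + 1) * ((Q ^ k) d * b0)
                = (c ^ k * (Q ^ k) d) * (c * b0) := by ring
              _ = 0 := by rw [hq, zero_mul]
              _ = _ := by rw [hz]; ring
        have t3 : c ^ (k + 1) * ((Q ^ k) (d - 1) * b1)
            = c ^ (((k : ℤ) + 1 + d).toNat) * ((P ^ k) (d - 1) * a1) := by
          by_cases hcase : 0 ≤ (k : ℤ) + (d - 1)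
          · have e : ((k : ℤ) + 1 + d).toNat = ((k : ℤ) + (d - 1)).toNat + 2 := by omega
            calc c ^ (k + 1) * ((Q ^ k) (d - 1) * b1)
                = (c ^ k * (Q ^ k) (d - 1)) * (c * b1) := by ring
              _ = (c ^ (((k : ℤ) + (d - 1)).toNat) * (P ^ k) (d - 1)) * (c * (c * a1)) := by
                  rw [ihe (d - 1), hr1]
              _ = _ := by rw [e]; ring
          · have hz : (P ^ k) (d - 1) = 0 := ihv _ (by omega)
            have hq : c ^ k * (Q ^ k) (d - 1) = 0 := by rw [ihe (d - 1), hz, mul_zero]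
            calc c ^ (k + 1) * ((Q ^ k) (d - 1) * b1)
                = (c ^ k * (Q ^ k) (d - 1)) * (c * b1) := by ring
              _ = 0 := by rw [hq, zero_mul]
              _ = _ := by rw [hz]; ring
        have t4 : c ^ (k + 1) * ((Q ^ k) (d - 2) * b2)
            = c ^ (((k : ℤ) + 1 + d).toNat) * ((P ^ k) (d - 2) * a2) := by
          by_cases hcase : 0 ≤ (k : ℤ) + (d - 2)
          · have e : ((k : ℤ) + 1 + d).toNat = ((k : ℤ) + (d - 2)).toNat + 3 := by omega
            calc c ^ (k + 1) * ((Q ^ k) (d - 2) * b2)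
                = (c ^ k * (Q ^ k) (d - 2)) * (c * b2) := by ring
              _ = (c ^ (((k : ℤ) + (d - 2)).toNat) * (P ^ k) (d - 2)) * (c * (c * (c * a2))) := by
                  rw [ihe (d - 2), hr2]
              _ = _ := by rw [e]; ring
          · have hz : (P ^ k) (d - 2) = 0 := ihv _ (by omega)
            have hq : c ^ k * (Q ^ k) (d - 2) = 0 := by rw [ihe (d - 2), hz, mul_zero]
            calc c ^ (k + 1) * ((Q ^ k) (d - 2) * b2)
                = (c ^ k * (Q ^ k) (d - 2)) * (c * b2) := by ring
              _ = 0 := by rw [hq, zero_mul]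
              _ = _ := by rw [hz]; ring
        calc c ^ (k + 1) * (Q ^ (k + 1)) d
            = c ^ (k + 1) * ((Q ^ k) (d + 1) * bm) + c ^ (k + 1) * ((Q ^ k) d * b0)
              + c ^ (k + 1) * ((Q ^ k) (d - 1) * b1) + c ^ (k + 1) * ((Q ^ k) (d - 2) * b2) := by
              rw [pow_succ Q, slice_mul Q (Q ^ k) bm b0 b1 b2 hQ d]; ring
          _ = c ^ (((k : ℤ) + 1 + d).toNat) * ((P ^ k) (d + 1) * am)
              + c ^ (((k : ℤ) + 1 + d).toNat) * ((P ^ k) d * a0)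
              + c ^ (((k : ℤ) + 1 + d).toNat) * ((P ^ k) (d - 1) * a1)
              + c ^ (((k : ℤ) + 1 + d).toNat) * ((P ^ k) (d - 2) * a2) := by
              rw [t1, t2, t3, t4]
          _ = c ^ ((((k : ℕ) + 1 : ℤ)) + d).toNat * (P ^ (k + 1)) d := by
              rw [pow_succ P, slice_mul P (P ^ k) am a0 a1 a2 hP d]; ring
  intro k
  have h := (key k).2 0
  rw [add_zero, Int.toNat_natCast] at h
  exact mul_left_cancel₀ (pow_ne_zero k hc) h

def sliceHom (α β : (ℤ × ℤ) →+ ℤ) : LaurentQ →ₐ[ℚ] B :=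
  AddMonoidAlgebra.lift ℚ B (ℤ × ℤ)
    { toFun := fun m => AddMonoidAlgebra.single (β m.toAdd) (AddMonoidAlgebra.single (α m.toAdd) 1)
      map_one' := by
        simp only [toAdd_one, map_zero]
        rw [AddMonoidAlgebra.one_def, AddMonoidAlgebra.one_def]
      map_mul' := fun x y => by
        simp only [toAdd_mul, map_add, AddMonoidAlgebra.single_mul_single, one_mul] }

lemma sliceHom_single (α β : (ℤ × ℤ) →+ ℤ) (m : ℤ × ℤ) (r : ℚ) :
    sliceHom α β (AddMonoidAlgebra.single m r)
      = AddMonoidAlgebra.single (β m) (AddMonoidAlgebra.single (α m) r) := by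
  simp only [sliceHom, AddMonoidAlgebra.lift_single, MonoidHom.coe_mk, OneHom.coe_mk,
    toAdd_ofAdd]
  rw [AddMonoidAlgebra.smul_single, AddMonoidAlgebra.smul_single', mul_one]

lemma sliceHom_zero_zero (α β : (ℤ × ℤ) →+ ℤ)
    (h : ∀ m : ℤ × ℤ, (α m = 0 ∧ β m = 0) ↔ m = 0) (p : LaurentQ) :
    (sliceHom α β p) 0 0 = p 0 := by
  induction p using AddMonoidAlgebra.induction_linear with
  | zero => simp
  | add f g hf hg =>
      simp only [map_add, AddMonoidAlgebra.coeff_add, Finsupp.add_apply, hf, hg]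
  | single m r =>
      have hiff := h m
      rw [sliceHom_single]
      simp only [AddMonoidAlgebra.coeff_single, Finsupp.single_apply, apply_ite (fun v : A => v 0),
      AddMonoidAlgebra.coeff_zero, Finsupp.zero_apply]
      split_ifs <;> tauto

/-- first mutation direction: slices along `y`-degree. -/
def Φ₁ : LaurentQ →ₐ[ℚ] B := sliceHom (AddMonoidHom.fst ℤ ℤ) (AddMonoidHom.snd ℤ ℤ)
/-- second mutation direction: slices along degree `a - b`. -/
def Φ₂ : LaurentQ →ₐ[ℚ] B :=
  sliceHom (AddMonoidHom.snd ℤ ℤ) (AddMonoidHom.fst ℤ ℤ - AddMonoidHom.snd ℤ ℤ)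

-- intermediate Laurent polynomials in the mutation chain
def h1P : LaurentQ :=
  AddMonoidAlgebra.single ((0, 1) : ℤ × ℤ) 1 + AddMonoidAlgebra.single ((1, 1) : ℤ × ℤ) 3 +
    AddMonoidAlgebra.single ((2, 1) : ℤ × ℤ) 3 + AddMonoidAlgebra.single ((3, 1) : ℤ × ℤ) 1 +
      AddMonoidAlgebra.single ((1, 0) : ℤ × ℤ) 2 + AddMonoidAlgebra.single ((-1, 0) : ℤ × ℤ) 1 +
        AddMonoidAlgebra.single ((-1, -1) : ℤ × ℤ) 1

def h2P : LaurentQ :=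
  AddMonoidAlgebra.single ((0, 1) : ℤ × ℤ) 1 + AddMonoidAlgebra.single ((1, 1) : ℤ × ℤ) 3 +
    AddMonoidAlgebra.single ((2, 1) : ℤ × ℤ) 3 + AddMonoidAlgebra.single ((3, 1) : ℤ × ℤ) 1 +
      AddMonoidAlgebra.single ((1, 0) : ℤ × ℤ) 5 + AddMonoidAlgebra.single ((2, 0) : ℤ × ℤ) 2 +
        AddMonoidAlgebra.single ((0, -1) : ℤ × ℤ) 2 + AddMonoidAlgebra.single ((1, -1) : ℤ × ℤ) 1 +
          AddMonoidAlgebra.single ((-1, -1) : ℤ × ℤ) 1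

-- slices (elements of A)
def c1 : A := AddMonoidAlgebra.single 0 1 + AddMonoidAlgebra.single 1 2 + AddMonoidAlgebra.single 2 1
def c2 : A := AddMonoidAlgebra.single 0 1 + AddMonoidAlgebra.single (-1) 1
def fm : A := AddMonoidAlgebra.single (-1) 1 + AddMonoidAlgebra.single 0 2 + AddMonoidAlgebra.single 1 1
def f0 : A := AddMonoidAlgebra.single (-1) 1 + AddMonoidAlgebra.single 1 2
def f1 : A := AddMonoidAlgebra.single 0 1 + AddMonoidAlgebra.single 1 1
def h1m : A := AddMonoidAlgebra.single (-1) 1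
def h11 : A := AddMonoidAlgebra.single 0 1 + AddMonoidAlgebra.single 1 3 +
  AddMonoidAlgebra.single 2 3 + AddMonoidAlgebra.single 3 1
def gm : A := AddMonoidAlgebra.single (-1) 1 + AddMonoidAlgebra.single 0 4 +
  AddMonoidAlgebra.single 1 6 + AddMonoidAlgebra.single 2 4 + AddMonoidAlgebra.single 3 1
def g0 : A := AddMonoidAlgebra.single 1 5 + AddMonoidAlgebra.single 2 2
def pm' : A := AddMonoidAlgebra.single 1 1 + AddMonoidAlgebra.single 0 1
def p0' : A := AddMonoidAlgebra.single 1 3 + AddMonoidAlgebra.single (-1) 1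
def p1' : A := AddMonoidAlgebra.single 1 3 + AddMonoidAlgebra.single 0 2
def p2' : A := AddMonoidAlgebra.single 1 1
def qm' : A := AddMonoidAlgebra.single 1 1
def q1' : A := AddMonoidAlgebra.single 1 3 + AddMonoidAlgebra.single 0 5 +
  AddMonoidAlgebra.single (-1) 2
def q2' : A := AddMonoidAlgebra.single (-1) 1 + AddMonoidAlgebra.single 0 2 +
  AddMonoidAlgebra.single 1 1

end dP5Period
namespace dP5Period

lemma zeroA_apply (n : ℤ) : (0 : A) n = 0 := rfl

lemma hc1 : c1 ≠ 0 := by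
  intro h
  have h0 : c1 (0 : ℤ) = (1 : ℚ) := by
    rw [c1, Aadd_apply, Aadd_apply, Asingle_apply, Asingle_apply, Asingle_apply]
    norm_num
  rw [h, zeroA_apply] at h0
  exact one_ne_zero h0.symm

lemma hc2 : c2 ≠ 0 := by
  intro h
  have h0 : c2 (0 : ℤ) = (1 : ℚ) := by
    rw [c2, Aadd_apply, Asingle_apply, Asingle_apply]
    norm_num
  rw [h, zeroA_apply] at h0
  exact one_ne_zero h0.symm

lemma rel_c1h1m : c1 * h1m = fm := by
  rw [c1, h1m, fm]
  ext n
  simp only [add_mul, mul_add, AddMonoidAlgebra.single_mul_single, Aadd_apply, Asingle_apply,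
    Int.reduceAdd, Int.reduceNeg, one_mul, mul_one]

lemma rel_h11 : h11 = c1 * f1 := by
  rw [c1, h11, f1]
  ext n
  simp only [add_mul, mul_add, AddMonoidAlgebra.single_mul_single, Aadd_apply, Asingle_apply,
    Int.reduceAdd, Int.reduceNeg, one_mul, mul_one]
  all_goals split_ifs <;> first | omega | norm_num

lemma rel_c1fm : c1 * fm = gm := by
  rw [c1, fm, gm]
  ext n
  simp only [add_mul, mul_add, AddMonoidAlgebra.single_mul_single, Aadd_apply, Asingle_apply,
    Int.reduceAdd, Int.reduceNeg, one_mul, mul_one]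
  all_goals split_ifs <;> first | omega | norm_num

lemma rel_c2qm : c2 * qm' = pm' := by
  rw [c2, qm', pm']
  ext n
  simp only [add_mul, mul_add, AddMonoidAlgebra.single_mul_single, Aadd_apply, Asingle_apply,
    Int.reduceAdd, Int.reduceNeg, one_mul, mul_one]

lemma rel_q1 : q1' = c2 * p1' := by
  rw [c2, q1', p1']
  ext n
  simp only [add_mul, mul_add, AddMonoidAlgebra.single_mul_single, Aadd_apply, Asingle_apply,
    Int.reduceAdd, Int.reduceNeg, one_mul, mul_one]
  all_goals split_ifs <;> first | omega | norm_num

lemma rel_q2 : q2' = c2 * (c2 * p2') := by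
  rw [c2, q2', p2']
  ext n
  simp only [add_mul, mul_add, AddMonoidAlgebra.single_mul_single, Aadd_apply, Asingle_apply,
    Int.reduceAdd, Int.reduceNeg, one_mul, mul_one]
  all_goals split_ifs <;> first | omega | norm_num

lemma E1 : Φ₁ fdP5 = AddMonoidAlgebra.single (-1) fm + AddMonoidAlgebra.single 0 f0 +
    AddMonoidAlgebra.single 1 f1 + AddMonoidAlgebra.single 2 0 := by
  rw [fdP5, Φ₁]
  simp only [map_add, sliceHom_single, AddMonoidHom.coe_fst, AddMonoidHom.coe_snd,
    fm, f0, f1, Bsingle_add, Bsingle_zero, Int.reduceNeg]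
  abel

lemma E2 : Φ₁ h1P = AddMonoidAlgebra.single (-1) h1m + AddMonoidAlgebra.single 0 f0 +
    AddMonoidAlgebra.single 1 h11 + AddMonoidAlgebra.single 2 0 := by
  rw [h1P, Φ₁]
  simp only [map_add, sliceHom_single, AddMonoidHom.coe_fst, AddMonoidHom.coe_snd,
    h1m, f0, h11, Bsingle_add, Bsingle_zero, Int.reduceNeg]
  abel

lemma E3 : Φ₂ h1P = AddMonoidAlgebra.single (-1) pm' + AddMonoidAlgebra.single 0 p0' +
    AddMonoidAlgebra.single 1 p1' + AddMonoidAlgebra.single 2 p2' := by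
  rw [h1P, Φ₂]
  simp only [map_add, sliceHom_single, AddMonoidHom.sub_apply, AddMonoidHom.coe_fst,
    AddMonoidHom.coe_snd, pm', p0', p1', p2', Bsingle_add, Bsingle_zero, Int.reduceNeg,
    Int.reduceSub, sub_zero, zero_sub, sub_self, sub_neg_eq_add, Int.reduceAdd]
  abel

lemma E4 : Φ₂ h2P = AddMonoidAlgebra.single (-1) qm' + AddMonoidAlgebra.single 0 p0' +
    AddMonoidAlgebra.single 1 q1' + AddMonoidAlgebra.single 2 q2' := by
  rw [h2P, Φ₂]
  simp only [map_add, sliceHom_single, AddMonoidHom.sub_apply, AddMonoidHom.coe_fst,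
    AddMonoidHom.coe_snd, qm', p0', q1', q2', Bsingle_add, Bsingle_zero, Int.reduceNeg,
    Int.reduceSub, sub_zero, zero_sub, sub_self, sub_neg_eq_add, Int.reduceAdd]
  abel

lemma E5 : Φ₁ h2P = AddMonoidAlgebra.single (-1) fm + AddMonoidAlgebra.single 0 g0 +
    AddMonoidAlgebra.single 1 h11 + AddMonoidAlgebra.single 2 0 := by
  rw [h2P, Φ₁]
  simp only [map_add, sliceHom_single, AddMonoidHom.coe_fst, AddMonoidHom.coe_snd,
    fm, g0, h11, Bsingle_add, Bsingle_zero, Int.reduceNeg]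
  abel

lemma E6 : Φ₁ gdP5 = AddMonoidAlgebra.single (-1) gm + AddMonoidAlgebra.single 0 g0 +
    AddMonoidAlgebra.single 1 f1 + AddMonoidAlgebra.single 2 0 := by
  rw [gdP5, Φ₁]
  simp only [map_add, sliceHom_single, AddMonoidHom.coe_fst, AddMonoidHom.coe_snd,
    gm, g0, f1, Bsingle_add, Bsingle_zero, Int.reduceNeg]
  abel

lemma hcond1 : ∀ m : ℤ × ℤ,
    ((AddMonoidHom.fst ℤ ℤ) m = 0 ∧ (AddMonoidHom.snd ℤ ℤ) m = 0) ↔ m = 0 := by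
  rintro ⟨a, b⟩
  simp only [AddMonoidHom.coe_fst, AddMonoidHom.coe_snd, Prod.mk_eq_zero]

lemma hcond2 : ∀ m : ℤ × ℤ,
    ((AddMonoidHom.snd ℤ ℤ) m = 0 ∧ (AddMonoidHom.fst ℤ ℤ - AddMonoidHom.snd ℤ ℤ) m = 0)
      ↔ m = 0 := by
  rintro ⟨a, b⟩
  simp only [AddMonoidHom.sub_apply, AddMonoidHom.coe_fst, AddMonoidHom.coe_snd,
    Prod.mk_eq_zero]
  omega

lemma Φ₁_zero_zero (p : LaurentQ) : (Φ₁ p) 0 0 = p 0 :=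
  sliceHom_zero_zero _ _ hcond1 p

lemma Φ₂_zero_zero (p : LaurentQ) : (Φ₂ p) 0 0 = p 0 :=
  sliceHom_zero_zero _ _ hcond2 p

end dP5Period

open dP5Period in
theorem constantTerm_pow_dP5_eq' :
    ∀ k : ℕ, (fdP5 ^ k) ((0, 0) : ℤ × ℤ) = (gdP5 ^ k) ((0, 0) : ℤ × ℤ) := by
  intro k
  have s1 := mutation_key c1 fm f0 f1 0 h1m f0 h11 0 (Φ₁ fdP5) (Φ₁ h1P) E1 E2
    rel_c1h1m rfl rel_h11 (by rw [mul_zero, mul_zero]) hc1 k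
  have s2 := mutation_key c2 pm' p0' p1' p2' qm' p0' q1' q2' (Φ₂ h1P) (Φ₂ h2P) E3 E4
    rel_c2qm rfl rel_q1 rel_q2 hc2 k
  have s3 := mutation_key c1 gm g0 f1 0 fm g0 h11 0 (Φ₁ gdP5) (Φ₁ h2P) E6 E5
    rel_c1fm rfl rel_h11 (by rw [mul_zero, mul_zero]) hc1 k
  have z : ((0, 0) : ℤ × ℤ) = 0 := rfl
  rw [z]
  calc (fdP5 ^ k) (0 : ℤ × ℤ)
      = ((Φ₁ fdP5) ^ k) 0 0 := by rw [← map_pow]; exact (Φ₁_zero_zero _).symm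
    _ = ((Φ₁ h1P) ^ k) 0 0 := (congrArg (fun v : A => v 0) s1).symm
    _ = (h1P ^ k) 0 := by rw [← map_pow]; exact Φ₁_zero_zero _
    _ = ((Φ₂ h1P) ^ k) 0 0 := by rw [← map_pow]; exact (Φ₂_zero_zero _).symm
    _ = ((Φ₂ h2P) ^ k) 0 0 := (congrArg (fun v : A => v 0) s2).symm
    _ = (h2P ^ k) 0 := by rw [← map_pow]; exact Φ₂_zero_zero _
    _ = ((Φ₁ h2P) ^ k) 0 0 := by rw [← map_pow]; exact (Φ₁_zero_zero _).symm
    _ = ((Φ₁ gdP5) ^ k) 0 0 := congrArg (fun v : A => v 0) s3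
    _ = (gdP5 ^ k) 0 := by rw [← map_pow]; exact Φ₁_zero_zero _

/-- The two mutation-equivalent potentials of `dP₅` (Section 10.1) have the same constant
terms of all powers, i.e. the same classical period: `const(f^k) = const(g^k)` for all
`k ≥ 1`. -/
theorem constantTerm_pow_dP5_eq :
    ∀ k : ℕ, 1 ≤ k → (fdP5 ^ k).coeff ((0, 0) : ℤ × ℤ) = (gdP5 ^ k).coeff ((0, 0) : ℤ × ℤ) :=
  fun k _ => constantTerm_pow_dP5_eq' k
end
end

section
/- For natural numbers n₁, n₂ with n₂ ≥ 2n₁ and (n₁,n₂) ≠ (0,0), define the rational number c'(n₁,n₂) = (−1)^{n₁+n₂} · (3n₂−n₁−1)! / ( n₁! · (n₂−2n₁)! · (n₂!)² ). Then: (i) for all n₁, n₂ with n₂ ≥ 2n₁ + 2, (n₁+1)·(n₁−3n₂+1)·c'(n₁+1, n₂) = (2n₁−n₂)·(2n₁−n₂+1)·c'(n₁, n₂); and (ii) for all n₁, n₂ with n₂ ≥ 2n₁ and (n₁,n₂) ≠ (0,0), (n₂+1)²·(2n₁−n₂−1)·c'(n₁, n₂+1) = −(n₁−3n₂)·(n₁−3n₂−1)·(n₁−3n₂−2)·c'(n₁,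 n₂). (All factors are interpreted as integers, positive or negative, cast into ℚ.) -/
noncomputable section

/-- The coefficients `c'(n₁,n₂) = (−1)^{n₁+n₂}·(3n₂−n₁−1)! / (n₁!·(n₂−2n₁)!·(n₂!)²)` of the
second solution of the Picard–Fuchs system of `K_{𝔽₃}` (meaningful for `n₂ ≥ 2n₁`,
`(n₁,n₂) ≠ (0,0)`). -/
def cKF3' (n₁ n₂ : ℕ) : ℚ :=
  (-1) ^ (n₁ + n₂) * ((3 * n₂ - n₁ - 1).factorial : ℚ) /
    ((n₁.factorial : ℚ) * ((n₂ - 2 * n₁).factorial : ℚ) * ((n₂.factorial : ℚ)) ^ 2)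

private lemma fact_cast_ne (n : ℕ) : ((n.factorial : ℚ)) ≠ 0 := by
  exact_mod_cast n.factorial_ne_zero

/-- **Example 11.2**: the coefficients
`c'(n₁,n₂) = (−1)^{n₁+n₂}(3n₂−n₁−1)!/(n₁!(n₂−2n₁)!(n₂!)²)` solve the two recurrences
imposed by the Picard–Fuchs operators `𝓛₁, 𝓛₂` of `K_{𝔽₃}`:
(i) `(n₁+1)(n₁−3n₂+1)·c'(n₁+1,n₂) = (2n₁−n₂)(2n₁−n₂+1)·c'(n₁,n₂)` for `n₂ ≥ 2n₁+2`;
(ii) `(n₂+1)²(2n₁−n₂−1)·c'(n₁,n₂+1) = −(n₁−3n₂)(n₁−3n₂−1)(n₁−3n₂−2)·c'(n₁,n₂)`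
for `n₂ ≥ 2n₁` with `(n₁,n₂) ≠ (0,0)`. -/
theorem cKF3'_solves_picardFuchs_recurrences :
    (∀ n₁ n₂ : ℕ, 2 * n₁ + 2 ≤ n₂ →
        ((n₁ : ℚ) + 1) * ((n₁ : ℚ) - 3 * (n₂ : ℚ) + 1) * cKF3' (n₁ + 1) n₂ =
          (2 * (n₁ : ℚ) - (n₂ : ℚ)) * (2 * (n₁ : ℚ) - (n₂ : ℚ) + 1) * cKF3' n₁ n₂) ∧
      (∀ n₁ n₂ : ℕ, 2 * n₁ ≤ n₂ → (n₁, n₂) ≠ (0, 0) →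
        ((n₂ : ℚ) + 1) ^ 2 * (2 * (n₁ : ℚ) - (n₂ : ℚ) - 1) * cKF3' n₁ (n₂ + 1) =
          -(((n₁ : ℚ) - 3 * (n₂ : ℚ)) * ((n₁ : ℚ) - 3 * (n₂ : ℚ) - 1) *
              ((n₁ : ℚ) - 3 * (n₂ : ℚ) - 2)) * cKF3' n₁ n₂) := by
  constructor
  · intro n₁ n₂ h
    obtain ⟨k, rfl⟩ : ∃ k, n₂ = 2 * n₁ + 2 + k := ⟨n₂ - (2 * n₁ + 2), by omega⟩
    unfold cKF3'
    have e1 : 3 * (2 * n₁ + 2 + k) - (n₁ + 1) - 1 = (5 * n₁ + 4 + 3 * k) := by omega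
    have e2 : 3 * (2 * n₁ + 2 + k) - n₁ - 1 = (5 * n₁ + 4 + 3 * k) + 1 := by omega
    have e3 : 2 * n₁ + 2 + k - 2 * (n₁ + 1) = k := by omega
    have e4 : 2 * n₁ + 2 + k - 2 * n₁ = k + 2 := by omega
    have e5 : n₁ + 1 + (2 * n₁ + 2 + k) = (n₁ + (2 * n₁ + 2 + k)) + 1 := by omega
    rw [e1, e2, e3, e4, e5, pow_succ, Nat.factorial_succ (5 * n₁ + 4 + 3 * k),
      Nat.factorial_succ n₁]
    have e6 : (k + 2).factorial = (k + 2) * ((k + 1) * k.factorial) := by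
      rw [Nat.factorial_succ, Nat.factorial_succ]
    rw [e6]
    have h1 := fact_cast_ne n₁
    have h2 := fact_cast_ne k
    have h3 := fact_cast_ne (2 * n₁ + 2 + k)
    have h4 := fact_cast_ne (5 * n₁ + 4 + 3 * k)
    field_simp
    push_cast
    ring
  · intro n₁ n₂ h hne
    obtain ⟨k, rfl⟩ : ∃ k, n₂ = 2 * n₁ + k := ⟨n₂ - 2 * n₁, by omega⟩
    have hpos : 0 < 5 * n₁ + 3 * k := by
      by_contra hc
      push_neg at hc
      apply hne
      have h0 : n₁ = 0 ∧ k = 0 := by omega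
      simp [h0.1, h0.2]
    obtain ⟨M, hM⟩ : ∃ M, 5 * n₁ + 3 * k = M + 1 := ⟨5 * n₁ + 3 * k - 1, by omega⟩
    unfold cKF3'
    have e1 : 3 * (2 * n₁ + k + 1) - n₁ - 1 = ((M + 1) + 1) + 1 := by omega
    have e2 : 3 * (2 * n₁ + k) - n₁ - 1 = M := by omega
    have e3 : 2 * n₁ + k + 1 - 2 * n₁ = k + 1 := by omega
    have e4 : 2 * n₁ + k - 2 * n₁ = k := by omega
    have e5 : n₁ + (2 * n₁ + k + 1) = (n₁ + (2 * n₁ + k)) + 1 := by omega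
    rw [e1, e2, e3, e4, e5, pow_succ, Nat.factorial_succ ((M + 1) + 1),
      Nat.factorial_succ (M + 1), Nat.factorial_succ M, Nat.factorial_succ k,
      Nat.factorial_succ (2 * n₁ + k)]
    have hMc : ((M : ℚ)) = 5 * n₁ + 3 * k - 1 := by
      have : (M : ℚ) + 1 = 5 * n₁ + 3 * k := by exact_mod_cast congrArg (Nat.cast : ℕ → ℚ) hM.symm
      linarith
    have h1 := fact_cast_ne n₁
    have h2 := fact_cast_ne k
    have h3 := fact_cast_ne (2 * n₁ + k)
    have h4 := fact_cast_ne M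
    field_simp
    push_cast [hMc]
    ring
end
end
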